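/- arXiv:2312.00541 — 3 statements merged into one kernel-verified Lean document; each statement's English description precedes it below -/
import Mathlib

section
/- Let p ≥ 1 and let μ and ν be Borel probability measures on ℝ with finite p-th moment. Then the p-Wasserstein distance between μ and ν equals the L^p((0,1))-distance between their quantile functions: W_p(μ,ν)^p = ∫_0^1 |F_μ^{-1}(t) − F_ν^{-1}(t)|^p dt. -/
set_option linter.unusedSectionVars false

open MeasureTheory Set

/-- A coupling of two Borel probability measures on `ℝ` is a measure on `ℝ × ℝ`
whose first marginal is `μ` and whose second marginal is `ν`. -/
def IsCoupling (μ ν : Measure ℝ) (π : Measure (ℝ × ℝ)) : Prop :=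
  π.map Prod.fst = μ ∧ π.map Prod.snd = ν

/-- The cumulative distribution function `F_μ(x) = μ((-∞, x])`. -/
noncomputable def cdf' (μ : Measure ℝ) (x : ℝ) : ℝ := (μ (Set.Iic x)).toReal

/-- The quantile function (monotone rearrangement) `F_μ⁻¹(t) = sup {x : F_μ(x) ≤ t}`. -/
noncomputable def quantile (μ : Measure ℝ) (t : ℝ) : ℝ := sSup {x : ℝ | cdf' μ x ≤ t}

/-- The `p`-Wasserstein distance, defined as the infimum of transport costs over couplings. -/
noncomputable def Wp (p : ℝ) (μ ν : Measure ℝ) : ℝ :=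
  (⨅ π : {π : Measure (ℝ × ℝ) // IsCoupling μ ν π},
    ∫ q, |q.1 - q.2| ^ p ∂(π.1)) ^ (1 / p)

open Filter ProbabilityTheory
open scoped Topology ENNReal

section QuantileBasics

variable (μ : Measure ℝ) [IsProbabilityMeasure μ]

lemma cdf'_eq (x : ℝ) : cdf' μ x = cdf μ x := (cdf_eq_real μ x).symm

lemma quantile_le_of_lt_cdf {t x : ℝ} (ht : 0 < t) (h : t < cdf μ x) :
    quantile μ t ≤ x := by
  have hne : {y : ℝ | cdf' μ y ≤ t}.Nonempty := by
    obtain ⟨y, hy⟩ := ((tendsto_cdf_atBot μ).eventually_lt_const ht).exists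
    exact ⟨y, by rw [mem_setOf_eq, cdf'_eq]; exact hy.le⟩
  refine csSup_le hne fun z hz => ?_
  by_contra hzx
  push_neg at hzx
  rw [mem_setOf_eq, cdf'_eq] at hz
  exact absurd h (not_lt.2 (le_trans (monotone_cdf μ hzx.le) hz))

lemma bddAbove_quantile_set {t : ℝ} (ht : t < 1) : BddAbove {y : ℝ | cdf' μ y ≤ t} := by
  obtain ⟨z, hz⟩ := ((tendsto_cdf_atTop μ).eventually_const_lt ht).exists
  refine ⟨z, fun w hw => ?_⟩
  rw [mem_setOf_eq, cdf'_eq] at hw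
  by_contra hwz
  push_neg at hwz
  exact absurd hz (not_lt.2 (le_trans (monotone_cdf μ hwz.le) hw))

lemma le_cdf_of_quantile_le {t x : ℝ} (ht : t < 1) (h : quantile μ t ≤ x) :
    t ≤ cdf μ x := by
  have key : ∀ y, x < y → t ≤ cdf μ y := by
    intro y hxy
    by_contra hc
    push_neg at hc
    have hy : y ∈ {y : ℝ | cdf' μ y ≤ t} := by rw [mem_setOf_eq, cdf'_eq]; exact hc.le
    have := le_csSup (bddAbove_quantile_set μ ht) hy
    exact absurd (this.trans h) (not_le.2 hxy)
  have hrc : Tendsto (cdf μ) (𝓝[>] x) (𝓝 (cdf μ x)) :=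
    ((cdf μ).right_continuous x).tendsto.mono_left (nhdsWithin_mono _ Ioi_subset_Ici_self)
  exact ge_of_tendsto hrc (eventually_nhdsWithin_of_forall fun y hy => key y hy)

lemma monotoneOn_quantile : MonotoneOn (quantile μ) (Ioo (0:ℝ) 1) := by
  intro a ha b hb hab
  refine csSup_le_csSup (bddAbove_quantile_set μ hb.2) ?_ fun z hz => le_trans hz hab
  obtain ⟨y, hy⟩ := ((tendsto_cdf_atBot μ).eventually_lt_const ha.1).exists
  exact ⟨y, by rw [mem_setOf_eq, cdf'_eq]; exact hy.le⟩

lemma quantile_aemeasurable :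
    AEMeasurable (quantile μ) (volume.restrict (Ioo (0:ℝ) 1)) := by
  set g : ℝ → ℝ := fun t => if t ∈ Ioo (0:ℝ) 1 then quantile μ t else 0 with hg
  have hmg : Measurable g := by
    apply measurable_of_Iic
    intro x
    have : g ⁻¹' Iic x =
        {t | t ∈ Ioo (0:ℝ) 1 ∧ quantile μ t ≤ x} ∪
        ((Ioo (0:ℝ) 1)ᶜ ∩ {t | (0:ℝ) ≤ x}) := by
      ext t
      simp only [mem_preimage, mem_Iic, hg, mem_union, mem_inter_iff, mem_compl_iff,
        mem_setOf_eq]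
      by_cases h : t ∈ Ioo (0:ℝ) 1 <;> simp [h]
    rw [this]
    refine MeasurableSet.union ?_ (measurableSet_Ioo.compl.inter (by
      by_cases h : (0:ℝ) ≤ x <;> simp [h]))
    have hoc : OrdConnected {t | t ∈ Ioo (0:ℝ) 1 ∧ quantile μ t ≤ x} := by
      constructor
      rintro a ⟨ha, hqa⟩ b ⟨hb, hqb⟩ z hz
      have hzIoo : z ∈ Ioo (0:ℝ) 1 := ⟨lt_of_lt_of_le ha.1 hz.1, lt_of_le_of_lt hz.2 hb.2⟩
      exact ⟨hzIoo, (monotoneOn_quantile μ hzIoo hb hz.2).trans hqb⟩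
    exact hoc.measurableSet
  refine ⟨g, hmg, ?_⟩
  filter_upwards [ae_restrict_mem measurableSet_Ioo] with t ht
  simp [hg, ht.1, ht.2]

end QuantileBasics
section MeasureComp

variable (μ ν : Measure ℝ) [IsProbabilityMeasure μ] [IsProbabilityMeasure ν]

instance : IsProbabilityMeasure (volume.restrict (Ioo (0:ℝ) 1)) :=
  ⟨by rw [Measure.restrict_apply_univ]; simp [Real.volume_Ioo]⟩

lemma restrict_quantile_le (x : ℝ) :
    (volume.restrict (Ioo (0:ℝ) 1)) {t | quantile μ t ≤ x} = μ (Iic x) := by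
  rw [Measure.restrict_apply' measurableSet_Ioo]
  have h1 : Ioo (0:ℝ) (cdf μ x) ⊆ {t | quantile μ t ≤ x} ∩ Ioo 0 1 := by
    intro t ht
    have ht1 : t < 1 := lt_of_lt_of_le ht.2 (cdf_le_one μ x)
    exact ⟨quantile_le_of_lt_cdf μ ht.1 ht.2, ht.1, ht1⟩
  have h2 : {t | quantile μ t ≤ x} ∩ Ioo 0 1 ⊆ Ioc (0:ℝ) (cdf μ x) := by
    rintro t ⟨hq, ht⟩
    exact ⟨ht.1, le_cdf_of_quantile_le μ ht.2 hq⟩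
  have hvol1 : volume (Ioo (0:ℝ) (cdf μ x)) = μ (Iic x) := by
    rw [Real.volume_Ioo, sub_zero, ofReal_cdf]
  have hvol2 : volume (Ioc (0:ℝ) (cdf μ x)) = μ (Iic x) := by
    rw [Real.volume_Ioc, sub_zero, ofReal_cdf]
  exact le_antisymm (hvol2 ▸ measure_mono h2) (hvol1 ▸ measure_mono h1)

lemma restrict_quantile_between (s u : ℝ) :
    (volume.restrict (Ioo (0:ℝ) 1)) {t | quantile μ t ≤ s ∧ u < quantile ν t}
      = ENNReal.ofReal (cdf μ s - cdf ν u) := by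
  rw [Measure.restrict_apply' measurableSet_Ioo]
  have h1 : Ioo (cdf ν u) (cdf μ s) ∩ Ioo 0 1
      ⊆ {t | quantile μ t ≤ s ∧ u < quantile ν t} ∩ Ioo 0 1 := by
    rintro t ⟨ht, ht01⟩
    refine ⟨⟨quantile_le_of_lt_cdf μ ht01.1 ht.2, ?_⟩, ht01⟩
    by_contra hc
    push_neg at hc
    exact absurd (le_cdf_of_quantile_le ν ht01.2 hc) (not_le.2 ht.1)
  have h2 : {t | quantile μ t ≤ s ∧ u < quantile ν t} ∩ Ioo 0 1
      ⊆ Icc (cdf ν u) (cdf μ s) := by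
    rintro t ⟨⟨hqs, hqu⟩, ht01⟩
    refine ⟨?_, le_cdf_of_quantile_le μ ht01.2 hqs⟩
    by_contra hc
    push_neg at hc
    exact absurd hqu (not_lt.2 (quantile_le_of_lt_cdf ν ht01.1 hc))
  have hio : Ioo (cdf ν u) (cdf μ s) ∩ Ioo (0:ℝ) 1 = Ioo (cdf ν u) (cdf μ s) := by
    rw [Set.Ioo_inter_Ioo, sup_eq_left.mpr (cdf_nonneg ν u), inf_eq_left.mpr (cdf_le_one μ s)]
  refine le_antisymm ((measure_mono h2).trans ?_) (le_trans ?_ (measure_mono h1))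
  · rw [Real.volume_Icc]
  · rw [hio, Real.volume_Ioo]

lemma map_quantile : (volume.restrict (Ioo (0:ℝ) 1)).map (quantile μ) = μ := by
  haveI : IsProbabilityMeasure ((volume.restrict (Ioo (0:ℝ) 1)).map (quantile μ)) :=
    Measure.isProbabilityMeasure_map (quantile_aemeasurable μ)
  refine Measure.ext_of_Iic _ _ fun x => ?_
  rw [Measure.map_apply_of_aemeasurable (quantile_aemeasurable μ) measurableSet_Iic]
  exact restrict_quantile_le μ x

end MeasureComp
section LayerCake

/-- Auxiliary measure for the layer-cake representation `d ^ p = ∫ (d - r)⁺ dρ(r)`. -/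
noncomputable def rho (p : ℝ) : Measure ℝ :=
  if p = 1 then Measure.dirac 0
  else (volume.restrict (Ioi (0:ℝ))).withDensity
    (fun r => ENNReal.ofReal (p * (p - 1) * r ^ (p - 2)))

lemma rho_sigmaFinite (p : ℝ) : SigmaFinite (rho p) := by
  rw [rho]
  split_ifs with h
  · infer_instance
  · exact SigmaFinite.withDensity_ofReal _

lemma rho_ae_nonneg (p : ℝ) : ∀ᵐ r ∂(rho p), 0 ≤ r := by
  rw [rho]
  split_ifs with h
  · simp [ae_iff]
  · have h0 : ∀ᵐ r ∂(volume.restrict (Ioi (0:ℝ))), 0 ≤ r := by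
      filter_upwards [ae_restrict_mem measurableSet_Ioi] with r hr using hr.le
    exact h0.filter_mono (withDensity_absolutelyContinuous _ _).ae_le

/-- First layer: `(|x - y| - r)⁺` as the total length of two strips. -/
lemma layer_one (x y r : ℝ) (hr : 0 ≤ r) :
    volume (Ico y (x - r)) + volume (Ico x (y - r)) = ENNReal.ofReal (|x - y| - r) := by
  rcases le_total y x with h | h
  · rw [Real.volume_Ico, Real.volume_Ico, abs_of_nonneg (by linarith : (0:ℝ) ≤ x - y)]
    have h2 : ENNReal.ofReal (y - r - x) = 0 := ENNReal.ofReal_eq_zero.mpr (by linarith)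
    rw [h2, add_zero]
    congr 1
    ring
  · rw [Real.volume_Ico, Real.volume_Ico, abs_of_nonpos (by linarith : x - y ≤ 0)]
    have h2 : ENNReal.ofReal (x - r - y) = 0 := ENNReal.ofReal_eq_zero.mpr (by linarith)
    rw [h2, zero_add]
    congr 1
    ring

lemma rho_density_measurable (p : ℝ) :
    Measurable (fun r : ℝ => ENNReal.ofReal (p * (p - 1) * r ^ (p - 2))) :=
  by fun_prop

/-- Second layer: `d ^ p = ∫ (d - r)⁺ dρ(r)` for `d ≥ 0`. -/
lemma layer_two {p : ℝ} (hp : 1 ≤ p) {d : ℝ} (hd : 0 ≤ d) :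
    ∫⁻ r, ENNReal.ofReal (d - r) ∂(rho p) = ENNReal.ofReal (d ^ p) := by
  rcases eq_or_lt_of_le hp with hp1 | hp1
  · -- p = 1
    rw [rho, if_pos hp1.symm, lintegral_dirac]
    rw [← hp1, Real.rpow_one, sub_zero]
  -- now 1 < p
  have hpne : p ≠ 1 := ne_of_gt hp1
  have hgm : Measurable fun r : ℝ => ENNReal.ofReal (d - r) := by fun_prop
  rw [rho, if_neg hpne,
    lintegral_withDensity_eq_lintegral_mul _ (rho_density_measurable p) hgm]
  simp only [Pi.mul_apply]
  rcases eq_or_lt_of_le hd with hd0 | hd0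
  · -- d = 0
    have hz : ∀ᵐ r ∂(volume.restrict (Ioi (0:ℝ))),
        ENNReal.ofReal (p * (p - 1) * r ^ (p - 2)) * ENNReal.ofReal (d - r) = 0 := by
      filter_upwards [ae_restrict_mem measurableSet_Ioi] with r hr
      have : ENNReal.ofReal (d - r) = 0 := ENNReal.ofReal_eq_zero.mpr (by
        rw [← hd0]; linarith [mem_Ioi.mp hr])
      simp [this]
    rw [lintegral_congr_ae hz, lintegral_zero, ← hd0,
      Real.zero_rpow (by positivity), ENNReal.ofReal_zero]
  -- now 0 < d
  have hsplit : Ioi (0:ℝ) = Ioo 0 d ∪ (Ici d ∩ Ioi 0) := by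
    ext r
    simp only [mem_Ioi, mem_union, mem_Ioo, mem_inter_iff, mem_Ici]
    constructor
    · intro hr
      rcases lt_or_ge r d with h | h
      · exact Or.inl ⟨hr, h⟩
      · exact Or.inr ⟨h, hr⟩
    · rintro (⟨h, _⟩ | ⟨_, h⟩) <;> exact h
  have hdisj : Disjoint (Ioo (0:ℝ) d) (Ici d ∩ Ioi 0) := by
    refine Set.disjoint_left.mpr ?_
    rintro r ⟨_, hrd⟩ ⟨hrd', _⟩
    exact absurd hrd (not_lt.2 hrd')
  rw [hsplit, lintegral_union (measurableSet_Ici.inter measurableSet_Ioi) hdisj]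
  have hzero : ∫⁻ r in Ici d ∩ Ioi 0,
      ENNReal.ofReal (p * (p - 1) * r ^ (p - 2)) * ENNReal.ofReal (d - r) = 0 := by
    rw [lintegral_eq_zero_iff (by fun_prop : Measurable fun r : ℝ =>
      ENNReal.ofReal (p * (p - 1) * r ^ (p - 2)) * ENNReal.ofReal (d - r))]
    filter_upwards [ae_restrict_mem (measurableSet_Ici.inter measurableSet_Ioi)]
      with r hr
    have hrd : d ≤ r := hr.1
    have : ENNReal.ofReal (d - r) = 0 := ENNReal.ofReal_eq_zero.mpr (by linarith)
    simp [this]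
  rw [hzero, add_zero]
  -- now compute the integral over Ioo 0 d
  set g : ℝ → ℝ := fun r => p * (p - 1) * r ^ (p - 2) * (d - r) with hgdef
  have h1 : IntervalIntegrable (fun r : ℝ => r ^ (p - 2)) volume 0 d :=
    intervalIntegral.intervalIntegrable_rpow' (by linarith)
  have hgint : IntegrableOn g (Ioo 0 d) volume := by
    have h2 : IntervalIntegrable (fun r : ℝ => r ^ (p - 2) * (p * (p - 1) * (d - r)))
        volume 0 d := by
      apply h1.mul_continuousOn
      exact (continuous_const.mul (continuous_const.sub continuous_id)).continuousOn
    have h3 : IntegrableOn (fun r : ℝ => r ^ (p - 2) * (p * (p - 1) * (d - r)))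
        (Ioc 0 d) volume := by
      rw [intervalIntegrable_iff] at h2
      simpa [Set.uIoc_of_le hd] using h2
    refine (h3.mono_set Ioo_subset_Ioc_self).congr_fun ?_ measurableSet_Ioo
    intro r _
    simp only [hgdef]
    ring
  have key : ∀ r ∈ Ioo (0:ℝ) d,
      ENNReal.ofReal (p * (p - 1) * r ^ (p - 2)) * ENNReal.ofReal (d - r)
        = ENNReal.ofReal (g r) := by
    intro r hr
    have hnn : (0:ℝ) ≤ p * (p - 1) * r ^ (p - 2) :=
      mul_nonneg (mul_nonneg (by linarith) (by linarith)) (Real.rpow_nonneg hr.1.le _)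
    rw [hgdef, ← ENNReal.ofReal_mul hnn]
  rw [setLIntegral_congr_fun_ae measurableSet_Ioo (ae_of_all _ key),
    ← ofReal_integral_eq_lintegral_ofReal hgint ?pos]
  case pos =>
    filter_upwards [ae_restrict_mem measurableSet_Ioo] with r hr
    have h1 : (0:ℝ) ≤ r ^ (p - 2) := Real.rpow_nonneg hr.1.le _
    have h2 : (0:ℝ) ≤ p * (p - 1) := mul_nonneg (by linarith) (by linarith)
    simp only [hgdef]
    have h3 : (0:ℝ) ≤ d - r := by linarith [hr.2]
    positivity
  congr 1
  -- real computation
  have hIoo : ∫ r in Ioo (0:ℝ) d, g r = ∫ r in (0:ℝ)..d, g r := by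
    rw [intervalIntegral.integral_of_le hd, integral_Ioc_eq_integral_Ioo]
  rw [hIoo]
  have heq : Set.EqOn g
      (fun r => p * (p - 1) * d * r ^ (p - 2) - p * (p - 1) * r ^ (p - 1))
      (Set.uIcc 0 d) := by
    intro r hr
    rw [Set.uIcc_of_le hd] at hr
    have hr0 : 0 ≤ r := hr.1
    have hkey : r ^ (p - 1) = r * r ^ (p - 2) := by
      rcases eq_or_lt_of_le hr0 with h0 | h0
      · rw [← h0, Real.zero_rpow (by intro hc; rw [sub_eq_zero] at hc; exact hpne hc),
          zero_mul]
      · rw [show p - 1 = 1 + (p - 2) from by ring, Real.rpow_add h0, Real.rpow_one]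
    simp only [hgdef]
    rw [hkey]
    ring
  rw [intervalIntegral.integral_congr heq]
  have hint1 : IntervalIntegrable (fun r : ℝ => p * (p - 1) * d * r ^ (p - 2)) volume 0 d :=
    h1.const_mul _
  have hint2 : IntervalIntegrable (fun r : ℝ => p * (p - 1) * r ^ (p - 1)) volume 0 d :=
    (intervalIntegral.intervalIntegrable_rpow' (by linarith)).const_mul _
  rw [intervalIntegral.integral_sub hint1 hint2,
    intervalIntegral.integral_const_mul, intervalIntegral.integral_const_mul,
    integral_rpow (Or.inl (by linarith)), integral_rpow (Or.inl (by linarith)),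
    show p - 2 + 1 = p - 1 from by ring, show p - 1 + 1 = p from by ring,
    Real.zero_rpow (by intro hc; rw [sub_eq_zero] at hc; exact hpne hc),
    Real.zero_rpow (by positivity : p ≠ 0)]
  have hdd : d ^ (1 + (p-1)) = d ^ (1:ℝ) * d ^ (p-1) := Real.rpow_add hd0 1 (p-1)
  rw [show (1:ℝ) + (p-1) = p from by ring, Real.rpow_one] at hdd
  have hp0 : p ≠ 0 := by positivity
  have hp1' : p - 1 ≠ 0 := by intro hc; rw [sub_eq_zero] at hc; exact hpne hc
  field_simp
  linear_combination (-p) * hdd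

end LayerCake
section Coupling

variable {μ ν : Measure ℝ} [IsProbabilityMeasure μ] [IsProbabilityMeasure ν]

lemma IsCoupling.isProbabilityMeasure {π : Measure (ℝ × ℝ)} (h : IsCoupling μ ν π) :
    IsProbabilityMeasure π := by
  constructor
  have : π (Prod.fst ⁻¹' (univ : Set ℝ)) = μ univ := by
    rw [← Measure.map_apply measurable_fst MeasurableSet.univ, h.1]
  simpa using this

lemma IsCoupling.fst_apply {π : Measure (ℝ × ℝ)} (h : IsCoupling μ ν π) {s : Set ℝ}
    (hs : MeasurableSet s) : π (Prod.fst ⁻¹' s) = μ s := by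
  rw [← Measure.map_apply measurable_fst hs, h.1]

lemma IsCoupling.snd_apply {π : Measure (ℝ × ℝ)} (h : IsCoupling μ ν π) {s : Set ℝ}
    (hs : MeasurableSet s) : π (Prod.snd ⁻¹' s) = ν s := by
  rw [← Measure.map_apply measurable_snd hs, h.2]

lemma quadrant_measurableSet (s u : ℝ) :
    MeasurableSet {q : ℝ × ℝ | q.2 ≤ s ∧ u < q.1} := by
  have : {q : ℝ × ℝ | q.2 ≤ s ∧ u < q.1}
      = (Prod.snd ⁻¹' Iic s) ∩ (Prod.fst ⁻¹' Ioi u) := rfl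
  rw [this]
  exact (measurable_snd measurableSet_Iic).inter (measurable_fst measurableSet_Ioi)

open ProbabilityTheory in
lemma quadrant_ge {π : Measure (ℝ × ℝ)} (h : IsCoupling μ ν π) (s u : ℝ) :
    ENNReal.ofReal (cdf ν s - cdf μ u) ≤ π {q : ℝ × ℝ | q.2 ≤ s ∧ u < q.1} := by
  have hsplit : π {q : ℝ × ℝ | q.2 ≤ s}
      ≤ π {q : ℝ × ℝ | q.1 ≤ u} + π {q : ℝ × ℝ | q.2 ≤ s ∧ u < q.1} := by
    refine le_trans (measure_mono ?_) (measure_union_le _ _)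
    intro q hq
    rcases le_or_gt q.1 u with h' | h'
    · exact Or.inl h'
    · exact Or.inr ⟨hq, h'⟩
  have h2 : π {q : ℝ × ℝ | q.2 ≤ s} = ENNReal.ofReal (cdf ν s) := by
    rw [show {q : ℝ × ℝ | q.2 ≤ s} = Prod.snd ⁻¹' Iic s from rfl,
      h.snd_apply measurableSet_Iic, ofReal_cdf]
  have h1 : π {q : ℝ × ℝ | q.1 ≤ u} = ENNReal.ofReal (cdf μ u) := by
    rw [show {q : ℝ × ℝ | q.1 ≤ u} = Prod.fst ⁻¹' Iic u from rfl,
      h.fst_apply measurableSet_Iic, ofReal_cdf]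
  rw [ENNReal.ofReal_sub _ (cdf_nonneg μ u), tsub_le_iff_left, ← h1, ← h2]
  exact hsplit


lemma quadrant_measurableSet' (s u : ℝ) :
    MeasurableSet {q : ℝ × ℝ | q.1 ≤ s ∧ u < q.2} := by
  have : {q : ℝ × ℝ | q.1 ≤ s ∧ u < q.2}
      = (Prod.fst ⁻¹' Iic s) ∩ (Prod.snd ⁻¹' Ioi u) := rfl
  rw [this]
  exact (measurable_fst measurableSet_Iic).inter (measurable_snd measurableSet_Ioi)

open ProbabilityTheory in
lemma quadrant_ge' {π : Measure (ℝ × ℝ)} (h : IsCoupling μ ν π) (s u : ℝ) :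
    ENNReal.ofReal (cdf μ s - cdf ν u) ≤ π {q : ℝ × ℝ | q.1 ≤ s ∧ u < q.2} := by
  have hsplit : π {q : ℝ × ℝ | q.1 ≤ s}
      ≤ π {q : ℝ × ℝ | q.2 ≤ u} + π {q : ℝ × ℝ | q.1 ≤ s ∧ u < q.2} := by
    refine le_trans (measure_mono ?_) (measure_union_le _ _)
    intro q hq
    rcases le_or_gt q.2 u with h' | h'
    · exact Or.inl h'
    · exact Or.inr ⟨hq, h'⟩
  have h1 : π {q : ℝ × ℝ | q.1 ≤ s} = ENNReal.ofReal (cdf μ s) := by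
    rw [show {q : ℝ × ℝ | q.1 ≤ s} = Prod.fst ⁻¹' Iic s from rfl,
      h.fst_apply measurableSet_Iic, ofReal_cdf]
  have h2 : π {q : ℝ × ℝ | q.2 ≤ u} = ENNReal.ofReal (cdf ν u) := by
    rw [show {q : ℝ × ℝ | q.2 ≤ u} = Prod.snd ⁻¹' Iic u from rfl,
      h.snd_apply measurableSet_Iic, ofReal_cdf]
  rw [ENNReal.ofReal_sub _ (cdf_nonneg ν u), tsub_le_iff_left, ← h1, ← h2]
  exact hsplit

/-- The transport cost of a measure on `ℝ × ℝ` as a lower integral. -/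
noncomputable def lcost (p : ℝ) (π : Measure (ℝ × ℝ)) : ℝ≥0∞ :=
  ∫⁻ q, ENNReal.ofReal (|q.1 - q.2| ^ p) ∂π

lemma lcost_eq_layer {p : ℝ} (hp : 1 ≤ p) (π : Measure (ℝ × ℝ)) [IsProbabilityMeasure π] :
    lcost p π = ∫⁻ r, ∫⁻ s,
      (π {q : ℝ × ℝ | q.2 ≤ s ∧ s + r < q.1} + π {q : ℝ × ℝ | q.1 ≤ s ∧ s + r < q.2})
        ∂volume ∂(rho p) := by
  haveI := rho_sigmaFinite p
  have step1 : lcost p π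
      = ∫⁻ q : ℝ × ℝ, ∫⁻ r, ENNReal.ofReal (|q.1 - q.2| - r) ∂(rho p) ∂π :=
    lintegral_congr fun q => (layer_two hp (abs_nonneg _)).symm
  have hmeas : AEMeasurable
      (Function.uncurry fun (q : ℝ × ℝ) (r : ℝ) => ENNReal.ofReal (|q.1 - q.2| - r))
      (π.prod (rho p)) := by
    apply Measurable.aemeasurable
    fun_prop
  rw [step1, lintegral_lintegral_swap hmeas]
  refine lintegral_congr_ae ?_
  filter_upwards [rho_ae_nonneg p] with r hr
  -- fixed r ≥ 0
  have inner1 : ∀ q : ℝ × ℝ, ENNReal.ofReal (|q.1 - q.2| - r)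
      = ∫⁻ s, ((Ico q.2 (q.1 - r)).indicator 1 s + (Ico q.1 (q.2 - r)).indicator 1 s)
        ∂volume := by
    intro q
    rw [lintegral_add_left ((measurable_one.indicator measurableSet_Ico)),
      lintegral_indicator_one measurableSet_Ico, lintegral_indicator_one measurableSet_Ico,
      layer_one _ _ _ hr]
  have swap2 : (∫⁻ q : ℝ × ℝ, ∫⁻ s,
        ((Ico q.2 (q.1 - r)).indicator 1 s + (Ico q.1 (q.2 - r)).indicator 1 s) ∂volume ∂π)
      = ∫⁻ s, ∫⁻ q : ℝ × ℝ,
        ((Ico q.2 (q.1 - r)).indicator 1 s + (Ico q.1 (q.2 - r)).indicator 1 s) ∂π ∂volume := by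
    refine lintegral_lintegral_swap ?_
    apply Measurable.aemeasurable
    have e1 : (Function.uncurry fun (q : ℝ × ℝ) (s : ℝ) =>
        ((Ico q.2 (q.1 - r)).indicator 1 s + (Ico q.1 (q.2 - r)).indicator 1 s)
          : (ℝ × ℝ) × ℝ → ℝ≥0∞)
        = ({z : (ℝ × ℝ) × ℝ | z.1.2 ≤ z.2 ∧ z.2 + r < z.1.1}.indicator 1)
          + ({z : (ℝ × ℝ) × ℝ | z.1.1 ≤ z.2 ∧ z.2 + r < z.1.2}.indicator 1) := by
      funext z
      simp only [Function.uncurry, Pi.add_apply, Set.indicator_apply, mem_Ico, mem_setOf_eq,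
        lt_sub_iff_add_lt, Pi.one_apply]
    rw [e1]
    have hm1 : MeasurableSet {z : (ℝ × ℝ) × ℝ | z.1.2 ≤ z.2 ∧ z.2 + r < z.1.1} :=
      (measurableSet_le measurable_fst.snd measurable_snd).inter
        (measurableSet_lt (measurable_snd.add_const r) measurable_fst.fst)
    have hm2 : MeasurableSet {z : (ℝ × ℝ) × ℝ | z.1.1 ≤ z.2 ∧ z.2 + r < z.1.2} :=
      (measurableSet_le measurable_fst.fst measurable_snd).inter
        (measurableSet_lt (measurable_snd.add_const r) measurable_fst.snd)
    exact (measurable_one.indicator hm1).add (measurable_one.indicator hm2)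
  rw [lintegral_congr inner1, swap2]
  refine lintegral_congr fun s => ?_
  have e2 : ∀ q : ℝ × ℝ, (Ico q.2 (q.1 - r)).indicator (1 : ℝ → ℝ≥0∞) s
      = {q : ℝ × ℝ | q.2 ≤ s ∧ s + r < q.1}.indicator 1 q := by
    intro q
    simp only [Set.indicator_apply, mem_Ico, mem_setOf_eq, lt_sub_iff_add_lt, Pi.one_apply]
  have e3 : ∀ q : ℝ × ℝ, (Ico q.1 (q.2 - r)).indicator (1 : ℝ → ℝ≥0∞) s
      = {q : ℝ × ℝ | q.1 ≤ s ∧ s + r < q.2}.indicator 1 q := by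
    intro q
    simp only [Set.indicator_apply, mem_Ico, mem_setOf_eq, lt_sub_iff_add_lt, Pi.one_apply]
  simp only [e2, e3]
  have hq1 : MeasurableSet {q : ℝ × ℝ | q.2 ≤ s ∧ s + r < q.1} :=
    quadrant_measurableSet s (s + r)
  have hq2 : MeasurableSet {q : ℝ × ℝ | q.1 ≤ s ∧ s + r < q.2} := by
    have : {q : ℝ × ℝ | q.1 ≤ s ∧ s + r < q.2}
        = (Prod.fst ⁻¹' Iic s) ∩ (Prod.snd ⁻¹' Ioi (s + r)) := rfl
    rw [this]
    exact (measurable_fst measurableSet_Iic).inter (measurable_snd measurableSet_Ioi)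
  rw [lintegral_add_left (measurable_one.indicator hq1),
    lintegral_indicator_one hq1, lintegral_indicator_one hq2]

end Coupling
section Final

lemma abs_sub_rpow_le {p : ℝ} (hp : 0 ≤ p) (x y : ℝ) :
    |x - y| ^ p ≤ 2 ^ p * |x| ^ p + 2 ^ p * |y| ^ p := by
  have h1 : |x - y| ≤ 2 * max |x| |y| := by
    have h0 : |x - y| ≤ |x| + |y| := by
      rw [sub_eq_add_neg]
      exact (abs_add_le _ _).trans_eq (by rw [abs_neg])
    have := le_max_left |x| |y|
    have := le_max_right |x| |y|
    linarith
  have h2 : |x - y| ^ p ≤ (2 * max |x| |y|) ^ p :=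
    Real.rpow_le_rpow (abs_nonneg _) h1 hp
  rw [Real.mul_rpow (by norm_num) (le_trans (abs_nonneg x) (le_max_left _ _))] at h2
  refine h2.trans ?_
  have h3 : (max |x| |y|) ^ p ≤ |x| ^ p + |y| ^ p := by
    rcases le_total |x| |y| with h | h
    · rw [max_eq_right h]
      nlinarith [Real.rpow_nonneg (abs_nonneg x) p]
    · rw [max_eq_left h]
      nlinarith [Real.rpow_nonneg (abs_nonneg y) p]
  calc (2:ℝ) ^ p * (max |x| |y|) ^ p
      ≤ 2 ^ p * (|x| ^ p + |y| ^ p) :=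
        mul_le_mul_of_nonneg_left h3 (Real.rpow_nonneg (by norm_num) p)
    _ = 2 ^ p * |x| ^ p + 2 ^ p * |y| ^ p := by ring

variable {μ ν : Measure ℝ} [IsProbabilityMeasure μ] [IsProbabilityMeasure ν]

lemma cost_continuous {p : ℝ} (hp : 0 < p) :
    Continuous fun q : ℝ × ℝ => |q.1 - q.2| ^ p :=
  Continuous.rpow_const ((continuous_fst.sub continuous_snd).abs) fun _ => Or.inr hp.le

lemma cost_integrable {p : ℝ} (hp : 1 ≤ p)
    (hμ : Integrable (fun x => |x| ^ p) μ) (hν : Integrable (fun x => |x| ^ p) ν)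
    {π : Measure (ℝ × ℝ)} (hc : IsCoupling μ ν π) :
    Integrable (fun q : ℝ × ℝ => |q.1 - q.2| ^ p) π := by
  haveI := hc.isProbabilityMeasure
  have hp0 : (0:ℝ) < p := by linarith
  refine ⟨(cost_continuous hp0).aestronglyMeasurable, ?_⟩
  rw [hasFiniteIntegral_iff_ofReal (ae_of_all _ fun q => Real.rpow_nonneg (abs_nonneg _) _)]
  have hb : ∀ q : ℝ × ℝ, ENNReal.ofReal (|q.1 - q.2| ^ p)
      ≤ ENNReal.ofReal (2 ^ p * |q.1| ^ p) + ENNReal.ofReal (2 ^ p * |q.2| ^ p) := by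
    intro q
    rw [← ENNReal.ofReal_add (by positivity) (by positivity)]
    exact ENNReal.ofReal_le_ofReal (abs_sub_rpow_le hp0.le _ _)
  refine lt_of_le_of_lt (lintegral_mono hb) ?_
  rw [lintegral_add_left (by fun_prop)]
  have hfst : ∫⁻ q : ℝ × ℝ, ENNReal.ofReal (2 ^ p * |q.1| ^ p) ∂π
      = ∫⁻ x, ENNReal.ofReal (2 ^ p * |x| ^ p) ∂μ := by
    rw [← hc.1, lintegral_map (by fun_prop) measurable_fst]
  have hsnd : ∫⁻ q : ℝ × ℝ, ENNReal.ofReal (2 ^ p * |q.2| ^ p) ∂π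
      = ∫⁻ x, ENNReal.ofReal (2 ^ p * |x| ^ p) ∂ν := by
    rw [← hc.2, lintegral_map (by fun_prop) measurable_snd]
  rw [hfst, hsnd]
  have hμ' : (∫⁻ x, ENNReal.ofReal (2 ^ p * |x| ^ p) ∂μ) < ⊤ := by
    have := hμ.hasFiniteIntegral
    rw [hasFiniteIntegral_iff_ofReal
      (ae_of_all _ fun x => Real.rpow_nonneg (abs_nonneg _) _)] at this
    calc ∫⁻ x, ENNReal.ofReal (2 ^ p * |x| ^ p) ∂μ
        = ∫⁻ x, ENNReal.ofReal (2 ^ p) * ENNReal.ofReal (|x| ^ p) ∂μ := by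
          refine lintegral_congr fun x => ?_
          rw [← ENNReal.ofReal_mul (by positivity)]
      _ = ENNReal.ofReal (2 ^ p) * ∫⁻ x, ENNReal.ofReal (|x| ^ p) ∂μ :=
          lintegral_const_mul' _ _ ENNReal.ofReal_ne_top
      _ < ⊤ := ENNReal.mul_lt_top ENNReal.ofReal_lt_top this
  have hν' : (∫⁻ x, ENNReal.ofReal (2 ^ p * |x| ^ p) ∂ν) < ⊤ := by
    have := hν.hasFiniteIntegral
    rw [hasFiniteIntegral_iff_ofReal
      (ae_of_all _ fun x => Real.rpow_nonneg (abs_nonneg _) _)] at this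
    calc ∫⁻ x, ENNReal.ofReal (2 ^ p * |x| ^ p) ∂ν
        = ∫⁻ x, ENNReal.ofReal (2 ^ p) * ENNReal.ofReal (|x| ^ p) ∂ν := by
          refine lintegral_congr fun x => ?_
          rw [← ENNReal.ofReal_mul (by positivity)]
      _ = ENNReal.ofReal (2 ^ p) * ∫⁻ x, ENNReal.ofReal (|x| ^ p) ∂ν :=
          lintegral_const_mul' _ _ ENNReal.ofReal_ne_top
      _ < ⊤ := ENNReal.mul_lt_top ENNReal.ofReal_lt_top this
  exact ENNReal.add_lt_top.mpr ⟨hμ', hν'⟩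

lemma lcost_ne_top {p : ℝ} (hp : 1 ≤ p)
    (hμ : Integrable (fun x => |x| ^ p) μ) (hν : Integrable (fun x => |x| ^ p) ν)
    {π : Measure (ℝ × ℝ)} (hc : IsCoupling μ ν π) : lcost p π ≠ ⊤ := by
  have := (cost_integrable hp hμ hν hc).hasFiniteIntegral
  rw [hasFiniteIntegral_iff_ofReal
    (ae_of_all _ fun q => Real.rpow_nonneg (abs_nonneg _) _)] at this
  exact this.ne

end Final

/-- For Borel probability measures on `ℝ` with finite `p`-th moment, the `p`-Wasserstein
distance equals the `L^p((0,1))` distance of the quantile functions. -/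
theorem wasserstein_eq_quantile_distance (p : ℝ) (hp : 1 ≤ p)
    (μ ν : Measure ℝ) [IsProbabilityMeasure μ] [IsProbabilityMeasure ν]
    (hμ : Integrable (fun x => |x| ^ p) μ) (hν : Integrable (fun x => |x| ^ p) ν) :
    Wp p μ ν ^ p = ∫ t in Ioo (0 : ℝ) 1, |quantile μ t - quantile ν t| ^ p := by
  classical
  have hp0 : (0:ℝ) < p := by linarith
  set Qpair : ℝ → ℝ × ℝ := fun t => (quantile μ t, quantile ν t) with hQp
  have hQA : AEMeasurable Qpair (volume.restrict (Ioo (0:ℝ) 1)) :=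
    (quantile_aemeasurable μ).prodMk (quantile_aemeasurable ν)
  set π₀ : Measure (ℝ × ℝ) := (volume.restrict (Ioo (0:ℝ) 1)).map Qpair with hπ₀def
  have hπ₀ : IsCoupling μ ν π₀ := by
    constructor
    · rw [hπ₀def, AEMeasurable.map_map_of_aemeasurable measurable_fst.aemeasurable hQA]
      exact map_quantile μ
    · rw [hπ₀def, AEMeasurable.map_map_of_aemeasurable measurable_snd.aemeasurable hQA]
      exact map_quantile ν
  haveI hprob₀ : IsProbabilityMeasure π₀ := hπ₀.isProbabilityMeasure
  have hquad1 : ∀ s u : ℝ, π₀ {q : ℝ × ℝ | q.2 ≤ s ∧ u < q.1}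
      = ENNReal.ofReal (cdf ν s - cdf μ u) := by
    intro s u
    rw [hπ₀def, Measure.map_apply_of_aemeasurable hQA (quadrant_measurableSet s u)]
    exact restrict_quantile_between ν μ s u
  have hquad2 : ∀ s u : ℝ, π₀ {q : ℝ × ℝ | q.1 ≤ s ∧ u < q.2}
      = ENNReal.ofReal (cdf μ s - cdf ν u) := by
    intro s u
    rw [hπ₀def, Measure.map_apply_of_aemeasurable hQA (quadrant_measurableSet' s u)]
    exact restrict_quantile_between μ ν s u
  have hmin : ∀ π' : Measure (ℝ × ℝ), IsCoupling μ ν π' → lcost p π₀ ≤ lcost p π' := by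
    intro π' hc
    haveI := hc.isProbabilityMeasure
    rw [lcost_eq_layer hp π₀, lcost_eq_layer hp π']
    refine lintegral_mono fun r => lintegral_mono fun s => add_le_add ?_ ?_
    · rw [hquad1 s (s + r)]
      exact quadrant_ge hc s (s + r)
    · rw [hquad2 s (s + r)]
      exact quadrant_ge' hc s (s + r)
  have hcost : ∀ π' : Measure (ℝ × ℝ), IsCoupling μ ν π' →
      ∫ q, |q.1 - q.2| ^ p ∂π' = (lcost p π').toReal := by
    intro π' hc
    rw [integral_eq_lintegral_of_nonneg_ae
      (ae_of_all _ fun q => Real.rpow_nonneg (abs_nonneg _) _)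
      (cost_continuous hp0).aestronglyMeasurable]
    rfl
  have hbdd : BddBelow (Set.range fun π' : {π' : Measure (ℝ × ℝ) // IsCoupling μ ν π'} =>
      ∫ q, |q.1 - q.2| ^ p ∂(π'.1)) := by
    refine ⟨0, ?_⟩
    rintro x ⟨π', rfl⟩
    exact integral_nonneg fun q => Real.rpow_nonneg (abs_nonneg _) _
  haveI : Nonempty {π' : Measure (ℝ × ℝ) // IsCoupling μ ν π'} := ⟨⟨π₀, hπ₀⟩⟩
  have hI : (⨅ π' : {π' : Measure (ℝ × ℝ) // IsCoupling μ ν π'},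
        ∫ q, |q.1 - q.2| ^ p ∂(π'.1))
      = ∫ q, |q.1 - q.2| ^ p ∂π₀ := by
    refine le_antisymm (ciInf_le hbdd ⟨π₀, hπ₀⟩) (le_ciInf fun π' => ?_)
    rw [hcost _ π'.2, hcost _ hπ₀]
    exact ENNReal.toReal_mono (lcost_ne_top hp hμ hν π'.2) (hmin _ π'.2)
  have hI0 : 0 ≤ (⨅ π' : {π' : Measure (ℝ × ℝ) // IsCoupling μ ν π'},
      ∫ q, |q.1 - q.2| ^ p ∂(π'.1)) :=
    Real.iInf_nonneg fun π' => integral_nonneg fun q => Real.rpow_nonneg (abs_nonneg _) _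
  rw [Wp, ← Real.rpow_mul hI0, one_div_mul_cancel hp0.ne', Real.rpow_one, hI, hπ₀def,
    integral_map hQA (cost_continuous hp0).aestronglyMeasurable]
end

section
/- Let μ and ν be Borel probability measures on ℝ with finite first moment. Then the 1-Wasserstein distance between μ and ν equals the L^1(ℝ)-distance between their cumulative distribution functions: W_1(μ,ν) = ∫_ℝ |F_μ(x) − F_ν(x)| dx. -/
open MeasureTheory Set

/-- The `1`-Wasserstein distance, defined as the infimum of transport costs over couplings. -/
noncomputable def W1 (μ ν : Measure ℝ) : ℝ :=
  ⨅ π : {π : Measure (ℝ × ℝ) // IsCoupling μ ν π}, ∫ q, |q.1 - q.2| ∂(π.1)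

section WassersteinAux

open ProbabilityTheory Filter ENNReal

noncomputable def Qf (μ : Measure ℝ) (u : ℝ) : ℝ :=
  if u ∈ Set.Ioo (0:ℝ) 1 then sInf {x | u ≤ cdf μ x} else 0

lemma q_nonempty (μ : Measure ℝ) {u : ℝ} (hu1 : u < 1) : {x | u ≤ cdf μ x}.Nonempty := by
  obtain ⟨x, hx⟩ := ((tendsto_cdf_atTop μ).eventually_const_le hu1).exists
  exact ⟨x, hx⟩

lemma q_bddBelow (μ : Measure ℝ) {u : ℝ} (hu : 0 < u) : BddBelow {x | u ≤ cdf μ x} := by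
  obtain ⟨x0, hx0⟩ := ((tendsto_cdf_atBot μ).eventually_lt_const hu).exists
  refine ⟨x0, fun y hy => ?_⟩
  by_contra h
  push_neg at h
  exact absurd (hy.trans (monotone_cdf μ h.le)) (not_le.2 hx0)

lemma Qf_le_iff (μ : Measure ℝ) {u : ℝ} (hu : u ∈ Set.Ioo (0:ℝ) 1) (t : ℝ) :
    Qf μ u ≤ t ↔ u ≤ cdf μ t := by
  rw [Qf, if_pos hu]
  constructor
  · intro h
    have key : ∀ t' : ℝ, t < t' → u ≤ cdf μ t' := by
      intro t' ht'
      obtain ⟨y, hy, hyt⟩ := exists_lt_of_csInf_lt (q_nonempty μ hu.2) (lt_of_le_of_lt h ht')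
      exact hy.trans (monotone_cdf μ hyt.le)
    have htd : Filter.Tendsto (cdf μ) (nhdsWithin t (Set.Ioi t)) (nhds (cdf μ t)) :=
      ((cdf μ).right_continuous t).tendsto.mono_left
        (nhdsWithin_mono t Set.Ioi_subset_Ici_self)
    exact ge_of_tendsto htd (eventually_nhdsWithin_of_forall fun x hx => key x hx)
  · intro h
    exact csInf_le (q_bddBelow μ hu.1) h

lemma Qf_measurable (μ : Measure ℝ) [IsProbabilityMeasure μ] : Measurable (Qf μ) := by
  apply measurable_of_Iic
  intro t
  have : Qf μ ⁻¹' Set.Iic t =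
      (Set.Ioo (0:ℝ) 1 ∩ Set.Iic (cdf μ t)) ∪
      (if (0:ℝ) ≤ t then (Set.Ioo (0:ℝ) 1)ᶜ else ∅) := by
    ext u
    by_cases hu : u ∈ Set.Ioo (0:ℝ) 1
    · have h2 : u ∉ (if (0:ℝ) ≤ t then (Set.Ioo (0:ℝ) 1)ᶜ else (∅ : Set ℝ)) := by
        split_ifs <;> simp [hu]
      simp only [Set.mem_preimage, Set.mem_Iic, Set.mem_union, Set.mem_inter_iff, hu, true_and,
        h2, or_false]
      exact Qf_le_iff μ hu t
    · have h1 : Qf μ u = 0 := if_neg hu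
      have h2 : u ∈ (if (0:ℝ) ≤ t then (Set.Ioo (0:ℝ) 1)ᶜ else (∅ : Set ℝ)) ↔ (0:ℝ) ≤ t := by
        split_ifs with h <;> simp [hu, h]
      simp only [Set.mem_preimage, Set.mem_Iic, h1, Set.mem_union, Set.mem_inter_iff, hu,
        false_and, false_or, h2]
  rw [this]
  refine (measurableSet_Ioo.inter measurableSet_Iic).union ?_
  split_ifs
  · exact measurableSet_Ioo.compl
  · exact MeasurableSet.empty

lemma volume_Ioo_inter_Ioc {a c : ℝ} (h0 : 0 ≤ a) (hc : c ≤ 1) (hac : a ≤ c) :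
    volume (Set.Ioo (0:ℝ) 1 ∩ Set.Ioc a c) = ENNReal.ofReal (c - a) := by
  apply le_antisymm
  · calc volume (Set.Ioo (0:ℝ) 1 ∩ Set.Ioc a c) ≤ volume (Set.Ioc a c) :=
        measure_mono Set.inter_subset_right
      _ = ENNReal.ofReal (c - a) := Real.volume_Ioc
  · calc ENNReal.ofReal (c - a) = volume (Set.Ioo a c) := Real.volume_Ioo.symm
      _ ≤ volume (Set.Ioo (0:ℝ) 1 ∩ Set.Ioc a c) := by
        apply measure_mono
        rintro u ⟨h1, h2⟩
        exact ⟨⟨lt_of_le_of_lt h0 h1, lt_of_lt_of_le h2 hc⟩, h1, h2.le⟩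

instance : IsProbabilityMeasure (volume.restrict (Set.Ioo (0:ℝ) 1)) :=
  ⟨by rw [Measure.restrict_apply_univ, Real.volume_Ioo]; norm_num⟩

lemma map_Qf (μ : Measure ℝ) [IsProbabilityMeasure μ] :
    (volume.restrict (Set.Ioo (0:ℝ) 1)).map (Qf μ) = μ := by
  have hQm := Qf_measurable μ
  have : IsProbabilityMeasure ((volume.restrict (Set.Ioo (0:ℝ) 1)).map (Qf μ)) :=
    Measure.isProbabilityMeasure_map hQm.aemeasurable
  apply MeasureTheory.Measure.eq_of_cdf
  ext1 t
  rw [cdf_eq_real, cdf_eq_real, measureReal_def, measureReal_def]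
  congr 1
  rw [Measure.map_apply hQm measurableSet_Iic,
    Measure.restrict_apply (hQm measurableSet_Iic)]
  have hset : Qf μ ⁻¹' Set.Iic t ∩ Set.Ioo 0 1 =
      Set.Ioo (0:ℝ) 1 ∩ Set.Ioc 0 (cdf μ t) := by
    ext u
    constructor
    · rintro ⟨h1, h2⟩
      exact ⟨h2, h2.1, (Qf_le_iff μ h2 t).1 h1⟩
    · rintro ⟨h1, _, h3⟩
      exact ⟨(Qf_le_iff μ h1 t).2 h3, h1⟩
  rw [hset, volume_Ioo_inter_Ioc le_rfl (cdf_le_one μ t) (cdf_nonneg μ t), sub_zero,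
    ofReal_cdf]


section Part2

lemma measurable_Slayer : MeasurableSet {q : (ℝ × ℝ) × ℝ | q.1.1 ⊓ q.1.2 ≤ q.2 ∧ q.2 < q.1.1 ⊔ q.1.2} := by
  refine MeasurableSet.inter ?_ ?_
  · exact measurableSet_le (measurable_fst.fst.min measurable_fst.snd) measurable_snd
  · exact measurableSet_lt measurable_snd (measurable_fst.fst.max measurable_fst.snd)

lemma layer_L1 (p : ℝ × ℝ) :
    ∫⁻ t, {q : (ℝ × ℝ) × ℝ | q.1.1 ⊓ q.1.2 ≤ q.2 ∧ q.2 < q.1.1 ⊔ q.1.2}.indicator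
      (fun _ => (1:ℝ≥0∞)) (p, t) ∂volume = ENNReal.ofReal |p.1 - p.2| := by
  have h : ∀ t : ℝ, {q : (ℝ × ℝ) × ℝ | q.1.1 ⊓ q.1.2 ≤ q.2 ∧ q.2 < q.1.1 ⊔ q.1.2}.indicator
      (fun _ => (1:ℝ≥0∞)) (p, t)
      = (Set.Ico (p.1 ⊓ p.2) (p.1 ⊔ p.2)).indicator (fun _ => (1:ℝ≥0∞)) t := by
    intro t
    simp [Set.indicator_apply, Set.mem_Ico]
  simp_rw [h]
  rw [lintegral_indicator measurableSet_Ico, lintegral_one, Measure.restrict_apply_univ,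
    Real.volume_Ico, max_sub_min_eq_abs', abs_sub_comm]

lemma layer_L2 (π : Measure (ℝ × ℝ)) (t : ℝ) :
    ∫⁻ p, {q : (ℝ × ℝ) × ℝ | q.1.1 ⊓ q.1.2 ≤ q.2 ∧ q.2 < q.1.1 ⊔ q.1.2}.indicator
      (fun _ => (1:ℝ≥0∞)) (p, t) ∂π = π {p : ℝ × ℝ | p.1 ⊓ p.2 ≤ t ∧ t < p.1 ⊔ p.2} := by
  have h : ∀ p : ℝ × ℝ, {q : (ℝ × ℝ) × ℝ | q.1.1 ⊓ q.1.2 ≤ q.2 ∧ q.2 < q.1.1 ⊔ q.1.2}.indicator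
      (fun _ => (1:ℝ≥0∞)) (p, t)
      = {p : ℝ × ℝ | p.1 ⊓ p.2 ≤ t ∧ t < p.1 ⊔ p.2}.indicator (fun _ => (1:ℝ≥0∞)) p := by
    intro p; simp [Set.indicator_apply]
  simp_rw [h]
  rw [lintegral_indicator, lintegral_one, Measure.restrict_apply_univ]
  exact MeasurableSet.inter
    (measurableSet_le (measurable_fst.min measurable_snd) measurable_const)
    (measurableSet_lt measurable_const (measurable_fst.max measurable_snd))

lemma cost_eq (π : Measure (ℝ × ℝ)) [IsProbabilityMeasure π] :
    ∫⁻ p, ENNReal.ofReal |p.1 - p.2| ∂π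
      = ∫⁻ t, π {p : ℝ × ℝ | p.1 ⊓ p.2 ≤ t ∧ t < p.1 ⊔ p.2} ∂volume := by
  have hmeas : Measurable (Function.uncurry fun (p : ℝ × ℝ) (t : ℝ) =>
      {q : (ℝ × ℝ) × ℝ | q.1.1 ⊓ q.1.2 ≤ q.2 ∧ q.2 < q.1.1 ⊔ q.1.2}.indicator
        (fun _ => (1:ℝ≥0∞)) (p, t)) := by
    have : (Function.uncurry fun (p : ℝ × ℝ) (t : ℝ) =>
        {q : (ℝ × ℝ) × ℝ | q.1.1 ⊓ q.1.2 ≤ q.2 ∧ q.2 < q.1.1 ⊔ q.1.2}.indicator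
          (fun _ => (1:ℝ≥0∞)) (p, t))
        = {q : (ℝ × ℝ) × ℝ | q.1.1 ⊓ q.1.2 ≤ q.2 ∧ q.2 < q.1.1 ⊔ q.1.2}.indicator
          (fun _ => (1:ℝ≥0∞)) := by
      funext q; rfl
    rw [this]
    exact measurable_const.indicator measurable_Slayer
  calc ∫⁻ p, ENNReal.ofReal |p.1 - p.2| ∂π
      = ∫⁻ p, ∫⁻ t, {q : (ℝ × ℝ) × ℝ | q.1.1 ⊓ q.1.2 ≤ q.2 ∧ q.2 < q.1.1 ⊔ q.1.2}.indicator
          (fun _ => (1:ℝ≥0∞)) (p, t) ∂volume ∂π := by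
        refine lintegral_congr fun p => ?_
        rw [layer_L1]
    _ = ∫⁻ t, ∫⁻ p, {q : (ℝ × ℝ) × ℝ | q.1.1 ⊓ q.1.2 ≤ q.2 ∧ q.2 < q.1.1 ⊔ q.1.2}.indicator
          (fun _ => (1:ℝ≥0∞)) (p, t) ∂π ∂volume := lintegral_lintegral_swap hmeas.aemeasurable
    _ = ∫⁻ t, π {p : ℝ × ℝ | p.1 ⊓ p.2 ≤ t ∧ t < p.1 ⊔ p.2} ∂volume := by
        refine lintegral_congr fun t => ?_
        rw [layer_L2]

end Part2

lemma coupling_prob {μ : Measure ℝ} [IsProbabilityMeasure μ] {π : Measure (ℝ × ℝ)}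
    (hπ : π.map Prod.fst = μ) : IsProbabilityMeasure π := by
  constructor
  have : π.map Prod.fst Set.univ = 1 := by rw [hπ]; exact measure_univ
  rwa [Measure.map_apply measurable_fst MeasurableSet.univ, Set.preimage_univ] at this

lemma per_t_lower (μ ν : Measure ℝ) [IsProbabilityMeasure μ] [IsProbabilityMeasure ν]
    (π : Measure (ℝ × ℝ)) (hπ1 : π.map Prod.fst = μ) (hπ2 : π.map Prod.snd = ν) (t : ℝ) :
    ENNReal.ofReal |cdf μ t - cdf ν t| ≤ π {p : ℝ × ℝ | p.1 ⊓ p.2 ≤ t ∧ t < p.1 ⊔ p.2} := by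
  have hA : π (Prod.fst ⁻¹' Set.Iic t) = ENNReal.ofReal (cdf μ t) := by
    rw [← Measure.map_apply measurable_fst measurableSet_Iic, hπ1, ← ofReal_cdf]
  have hB : π (Prod.snd ⁻¹' Set.Iic t) = ENNReal.ofReal (cdf ν t) := by
    rw [← Measure.map_apply measurable_snd measurableSet_Iic, hπ2, ← ofReal_cdf]
  have hsub1 : (Prod.fst ⁻¹' Set.Iic t) \ (Prod.snd ⁻¹' Set.Iic t)
      ⊆ {p : ℝ × ℝ | p.1 ⊓ p.2 ≤ t ∧ t < p.1 ⊔ p.2} := by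
    rintro p ⟨h1, h2⟩
    simp only [Set.mem_preimage, Set.mem_Iic, not_le] at h1 h2
    exact ⟨inf_le_of_left_le h1, lt_of_lt_of_le h2 le_sup_right⟩
  have hsub2 : (Prod.snd ⁻¹' Set.Iic t) \ (Prod.fst ⁻¹' Set.Iic t)
      ⊆ {p : ℝ × ℝ | p.1 ⊓ p.2 ≤ t ∧ t < p.1 ⊔ p.2} := by
    rintro p ⟨h1, h2⟩
    simp only [Set.mem_preimage, Set.mem_Iic, not_le] at h1 h2
    exact ⟨inf_le_of_right_le h1, lt_of_lt_of_le h2 le_sup_left⟩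
  have key : ∀ (A B : Set (ℝ × ℝ)), A \ B ⊆ {p : ℝ × ℝ | p.1 ⊓ p.2 ≤ t ∧ t < p.1 ⊔ p.2} →
      π A - π B ≤ π {p : ℝ × ℝ | p.1 ⊓ p.2 ≤ t ∧ t < p.1 ⊔ p.2} := by
    intro A B hAB
    rw [tsub_le_iff_right]
    calc π A ≤ π ((A \ B) ∪ B) :=
          measure_mono fun x hx => (em (x ∈ B)).elim Or.inr (fun h => Or.inl ⟨hx, h⟩)
      _ ≤ π (A \ B) + π B := measure_union_le _ _
      _ ≤ π {p : ℝ × ℝ | p.1 ⊓ p.2 ≤ t ∧ t < p.1 ⊔ p.2} + π B :=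
          add_le_add_left (measure_mono hAB) _
  rcases le_total (cdf μ t) (cdf ν t) with h | h
  · rw [abs_sub_comm, abs_of_nonneg (sub_nonneg.2 h),
      ENNReal.ofReal_sub _ (cdf_nonneg μ t), ← hA, ← hB]
    exact key _ _ hsub2
  · rw [abs_of_nonneg (sub_nonneg.2 h), ENNReal.ofReal_sub _ (cdf_nonneg ν t), ← hA, ← hB]
    exact key _ _ hsub1

lemma per_t_quantile (μ ν : Measure ℝ) [IsProbabilityMeasure μ] [IsProbabilityMeasure ν] (t : ℝ) :
    ((volume.restrict (Set.Ioo (0:ℝ) 1)).map (fun u => (Qf μ u, Qf ν u)))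
        {p : ℝ × ℝ | p.1 ⊓ p.2 ≤ t ∧ t < p.1 ⊔ p.2}
      = ENNReal.ofReal |cdf μ t - cdf ν t| := by
  have hG : Measurable (fun u => (Qf μ u, Qf ν u)) :=
    (Qf_measurable μ).prodMk (Qf_measurable ν)
  have hS : MeasurableSet {p : ℝ × ℝ | p.1 ⊓ p.2 ≤ t ∧ t < p.1 ⊔ p.2} :=
    MeasurableSet.inter
      (measurableSet_le (measurable_fst.min measurable_snd) measurable_const)
      (measurableSet_lt measurable_const (measurable_fst.max measurable_snd))
  rw [Measure.map_apply hG hS, Measure.restrict_apply (hG hS)]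
  have hset : (fun u => (Qf μ u, Qf ν u)) ⁻¹' {p : ℝ × ℝ | p.1 ⊓ p.2 ≤ t ∧ t < p.1 ⊔ p.2}
      ∩ Set.Ioo 0 1
      = Set.Ioo (0:ℝ) 1 ∩ Set.Ioc (cdf μ t ⊓ cdf ν t) (cdf μ t ⊔ cdf ν t) := by
    ext u
    simp only [Set.mem_inter_iff, Set.mem_preimage, Set.mem_setOf_eq, Set.mem_Ioc]
    constructor
    · rintro ⟨⟨h1, h2⟩, hu⟩
      rw [inf_le_iff, Qf_le_iff μ hu t, Qf_le_iff ν hu t, ← le_sup_iff] at h1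
      rw [lt_iff_not_ge, sup_le_iff, Qf_le_iff μ hu t, Qf_le_iff ν hu t, ← le_inf_iff,
        ← lt_iff_not_ge] at h2
      exact ⟨hu, h2, h1⟩
    · rintro ⟨hu, h2, h1⟩
      refine ⟨⟨?_, ?_⟩, hu⟩
      · rw [inf_le_iff, Qf_le_iff μ hu t, Qf_le_iff ν hu t, ← le_sup_iff]; exact h1
      · rw [lt_iff_not_ge, sup_le_iff, Qf_le_iff μ hu t, Qf_le_iff ν hu t, ← le_inf_iff,
          ← lt_iff_not_ge]; exact h2
  rw [hset, volume_Ioo_inter_Ioc (le_inf (cdf_nonneg μ t) (cdf_nonneg ν t))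
    (sup_le (cdf_le_one μ t) (cdf_le_one ν t)) inf_le_sup, max_sub_min_eq_abs', abs_sub_comm]

lemma lint_abs_ne_top {μ : Measure ℝ} (hμ : Integrable (fun x => |x|) μ) :
    ∫⁻ x, ENNReal.ofReal |x| ∂μ ≠ ⊤ := by
  have h := hμ.2
  rw [HasFiniteIntegral] at h
  have heq : ∀ x : ℝ, ENNReal.ofReal |x| = (‖|x|‖₊ : ℝ≥0∞) := by
    intro x
    rw [Real.nnnorm_abs, ← enorm_eq_nnnorm, Real.enorm_eq_ofReal_abs]
  simp_rw [heq]
  exact h.ne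

lemma cost_ne_top (μ ν : Measure ℝ) [IsProbabilityMeasure μ] [IsProbabilityMeasure ν]
    (hμ : Integrable (fun x => |x|) μ) (hν : Integrable (fun x => |x|) ν)
    (π : Measure (ℝ × ℝ)) (hπ1 : π.map Prod.fst = μ) (hπ2 : π.map Prod.snd = ν) :
    ∫⁻ p, ENNReal.ofReal |p.1 - p.2| ∂π ≠ ⊤ := by
  have habs : Measurable (fun x : ℝ => ENNReal.ofReal |x|) :=
    ENNReal.measurable_ofReal.comp measurable_abs
  have hb : ∫⁻ p, ENNReal.ofReal |p.1 - p.2| ∂π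
      ≤ ∫⁻ p : ℝ × ℝ, (ENNReal.ofReal |p.1| + ENNReal.ofReal |p.2|) ∂π := by
    refine lintegral_mono fun p => ?_
    rw [← ENNReal.ofReal_add (abs_nonneg _) (abs_nonneg _)]
    refine ENNReal.ofReal_le_ofReal ?_
    calc |p.1 - p.2| = |p.1 + -p.2| := by ring_nf
      _ ≤ |p.1| + |-p.2| := abs_add_le _ _
      _ = |p.1| + |p.2| := by rw [abs_neg]
  refine ne_top_of_le_ne_top ?_ hb
  rw [lintegral_add_left (μ := π) ((measurable_fst (α := ℝ) (β := ℝ)).abs.ennreal_ofReal)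
    (fun p : ℝ × ℝ => ENNReal.ofReal |p.2|)]
  have h1 : ∫⁻ p : ℝ × ℝ, ENNReal.ofReal |p.1| ∂π = ∫⁻ x, ENNReal.ofReal |x| ∂μ := by
    rw [← hπ1, lintegral_map habs measurable_fst]
  have h2 : ∫⁻ p : ℝ × ℝ, ENNReal.ofReal |p.2| ∂π = ∫⁻ x, ENNReal.ofReal |x| ∂ν := by
    rw [← hπ2, lintegral_map habs measurable_snd]
  rw [h1, h2]
  exact ENNReal.add_ne_top.2 ⟨lint_abs_ne_top hμ, lint_abs_ne_top hν⟩


end WassersteinAux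

open ProbabilityTheory Filter ENNReal in
/-- For Borel probability measures on `ℝ` with finite first moment, the `1`-Wasserstein
distance equals the `L¹(ℝ)` distance of the cumulative distribution functions. -/
theorem W1_eq_cdf_L1_dist (μ ν : Measure ℝ)
    [IsProbabilityMeasure μ] [IsProbabilityMeasure ν]
    (hμ : Integrable (fun x => |x|) μ) (hν : Integrable (fun x => |x|) ν) :
    W1 μ ν = ∫ x : ℝ, |cdf' μ x - cdf' ν x| := by
  
  have hG : Measurable (fun u => (Qf μ u, Qf ν u)) := (Qf_measurable μ).prodMk (Qf_measurable ν)
  set πq := (volume.restrict (Set.Ioo (0:ℝ) 1)).map (fun u => (Qf μ u, Qf ν u)) with hπq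
  have hcoup : IsCoupling μ ν πq := by
    constructor
    · rw [hπq, Measure.map_map measurable_fst hG]
      exact map_Qf μ
    · rw [hπq, Measure.map_map measurable_snd hG]
      exact map_Qf ν
  have hcost : ∀ (π : Measure (ℝ × ℝ)), ∫ q, |q.1 - q.2| ∂π
      = (∫⁻ q, ENNReal.ofReal |q.1 - q.2| ∂π).toReal := by
    intro π
    rw [integral_eq_lintegral_of_nonneg_ae (f := fun q : ℝ × ℝ => |q.1 - q.2|) (ae_of_all _ fun q => abs_nonneg _)
      ((measurable_fst.sub measurable_snd).abs.aestronglyMeasurable)]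
  have hRHS : (∫ x : ℝ, |cdf' μ x - cdf' ν x|)
      = (∫⁻ t, ENNReal.ofReal |cdf μ t - cdf ν t| ∂volume).toReal := by
    have heq : ∀ x, |cdf' μ x - cdf' ν x| = |cdf μ x - cdf ν x| := by
      intro x
      simp only [cdf']
      rw [cdf_eq_real, cdf_eq_real, measureReal_def, measureReal_def]
    simp_rw [heq]
    rw [integral_eq_lintegral_of_nonneg_ae (f := fun t => |cdf μ t - cdf ν t|) (ae_of_all _ fun q => abs_nonneg _)
      (((monotone_cdf μ).measurable.sub (monotone_cdf ν).measurable).abs.aestronglyMeasurable)]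
  haveI hq_prob : IsProbabilityMeasure πq := coupling_prob hcoup.1
  have hLq : ∫⁻ q, ENNReal.ofReal |q.1 - q.2| ∂πq
      = ∫⁻ t, ENNReal.ofReal |cdf μ t - cdf ν t| ∂volume := by
    rw [cost_eq πq]
    exact lintegral_congr fun t => per_t_quantile μ ν t
  have hfin : ∀ π : Measure (ℝ × ℝ), IsCoupling μ ν π →
      ∫⁻ q, ENNReal.ofReal |q.1 - q.2| ∂π ≠ ⊤ :=
    fun π hπ => cost_ne_top μ ν hμ hν π hπ.1 hπ.2
  have hlow : ∀ π : Measure (ℝ × ℝ), IsCoupling μ ν π →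
      (∫⁻ t, ENNReal.ofReal |cdf μ t - cdf ν t| ∂volume)
        ≤ ∫⁻ q, ENNReal.ofReal |q.1 - q.2| ∂π := by
    intro π hπ
    haveI : IsProbabilityMeasure π := coupling_prob hπ.1
    rw [cost_eq π]
    exact lintegral_mono fun t => per_t_lower μ ν π hπ.1 hπ.2 t
  haveI hne : Nonempty {π : Measure (ℝ × ℝ) // IsCoupling μ ν π} := ⟨⟨πq, hcoup⟩⟩
  rw [W1]
  apply le_antisymm
  · calc (⨅ π : {π : Measure (ℝ × ℝ) // IsCoupling μ ν π}, ∫ q, |q.1 - q.2| ∂(π.1))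
        ≤ ∫ q, |q.1 - q.2| ∂πq :=
          ciInf_le (f := fun π : {π : Measure (ℝ × ℝ) // IsCoupling μ ν π} => ∫ q, |q.1 - q.2| ∂(π.1))
            ⟨(0:ℝ), by rintro x ⟨π, rfl⟩; exact integral_nonneg fun q => abs_nonneg _⟩
            ⟨πq, hcoup⟩
      _ = _ := by rw [hcost πq, hLq, ← hRHS]
  · rw [hRHS]
    refine le_ciInf fun π => ?_
    rw [hcost π.1]
    exact ENNReal.toReal_mono (hfin π.1 π.2) (hlow π.1 π.2)
end

section
/- Let μ₀ and μ₁ be Borel probability measures on ℝ with finite first moment. Then the Kantorovich duality formula holds: W_1(μ₀,μ₁) = sup over all bounded Lipschitz functions φ : ℝ → ℝ with positive Lipschitz constant of (1/Lip(φ)) · (∫_ℝ φ dμ₁ − ∫_ℝ φ dμ₀), where Lip(φ) denotes the Lipschitz constant of φ. -/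
open MeasureTheory Set Filter ProbabilityTheory intervalIntegral
open scoped Topology

set_option linter.unusedSectionVars false
set_option linter.unusedVariables false

/-- The (optimal) Lipschitz constant of a function `φ : ℝ → ℝ`. -/
noncomputable def lipConst (φ : ℝ → ℝ) : ℝ :=
  sInf {L : ℝ | 0 ≤ L ∧ LipschitzWith (Real.toNNReal L) φ}

section Quantile

noncomputable def quant (μ : Measure ℝ) (u : ℝ) : ℝ := sInf {x | u ≤ cdf μ x}

variable {μ : Measure ℝ} [IsProbabilityMeasure μ] {u : ℝ}

lemma quant_set_nonempty (hu : u < 1) : {x | u ≤ cdf μ x}.Nonempty := by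
  have := (tendsto_cdf_atTop μ).eventually_const_le hu
  rcases this.exists with ⟨x, hx⟩
  exact ⟨x, hx⟩

lemma quant_set_bddBelow (hu : 0 < u) : BddBelow {x | u ≤ cdf μ x} := by
  have := (tendsto_cdf_atBot μ).eventually_lt_const hu
  rcases this.exists with ⟨x, hx⟩
  refine ⟨x, fun y hy => ?_⟩
  by_contra h
  push_neg at h
  exact absurd (le_trans hy (monotone_cdf μ h.le)) (not_le.2 hx)

lemma le_cdf_quant (hu : u ∈ Ioo (0:ℝ) 1) : u ≤ cdf μ (quant μ u) := by
  have hne := quant_set_nonempty (μ := μ) hu.2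
  have hbd := quant_set_bddBelow (μ := μ) hu.1
  set q := quant μ u with hq
  have h1 : ∀ x ∈ Ioi q, u ≤ cdf μ x := by
    intro x hx
    rcases (csInf_lt_iff hbd hne).1 hx with ⟨y, hy, hyx⟩
    exact le_trans hy (monotone_cdf μ hyx.le)
  have h2 : Tendsto (cdf μ) (𝓝[>] q) (𝓝 (cdf μ q)) :=
    ((cdf μ).right_continuous q).mono_left (nhdsWithin_mono _ Ioi_subset_Ici_self)
  exact ge_of_tendsto h2 (eventually_nhdsWithin_of_forall h1)

lemma quant_le_iff (hu : u ∈ Ioo (0:ℝ) 1) {x : ℝ} : quant μ u ≤ x ↔ u ≤ cdf μ x := by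
  constructor
  · intro h
    exact le_trans (le_cdf_quant hu) (monotone_cdf μ h)
  · intro h
    exact csInf_le (quant_set_bddBelow hu.1) h

lemma monotoneOn_quant : MonotoneOn (quant μ) (Ioo (0:ℝ) 1) := by
  intro a ha b hb hab
  exact csInf_le_csInf (quant_set_bddBelow ha.1) (quant_set_nonempty hb.2)
    (fun x hx => le_trans hab hx)

lemma aemeasurable_quant : AEMeasurable (quant μ) (volume.restrict (Ioo (0:ℝ) 1)) :=
  aemeasurable_restrict_of_monotoneOn measurableSet_Ioo monotoneOn_quant

instance inst_s3 : IsProbabilityMeasure (volume.restrict (Ioo (0:ℝ) 1)) := by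
  constructor
  rw [Measure.restrict_apply_univ, Real.volume_Ioo]
  norm_num

lemma map_quant : Measure.map (quant μ) (volume.restrict (Ioo (0:ℝ) 1)) = μ := by
  have hmeas := aemeasurable_quant (μ := μ)
  have : IsProbabilityMeasure (Measure.map (quant μ) (volume.restrict (Ioo (0:ℝ) 1))) :=
    Measure.isProbabilityMeasure_map hmeas
  refine Measure.ext_of_Iic _ _ (fun x => ?_)
  rw [Measure.map_apply_of_aemeasurable hmeas measurableSet_Iic,
    Measure.restrict_apply' measurableSet_Ioo]
  have hset : quant μ ⁻¹' Iic x ∩ Ioo 0 1 = Ioo (0:ℝ) 1 ∩ Iic (cdf μ x) := by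
    ext u
    simp only [mem_inter_iff, mem_preimage, mem_Iic, mem_Ioo]
    constructor
    · rintro ⟨hq, hu⟩
      exact ⟨hu, (quant_le_iff hu).1 hq⟩
    · rintro ⟨hu, hq⟩
      exact ⟨(quant_le_iff hu).2 hq, hu⟩
  rw [hset, ← ofReal_cdf μ x]
  rcases lt_or_ge (cdf μ x) 1 with h | h
  · have : Ioo (0:ℝ) 1 ∩ Iic (cdf μ x) = Ioc (0:ℝ) (cdf μ x) := by
      ext u
      simp only [mem_inter_iff, mem_Ioo, mem_Iic, mem_Ioc]
      exact ⟨fun ⟨⟨h1, _⟩, h3⟩ => ⟨h1, h3⟩, fun ⟨h1, h2⟩ => ⟨⟨h1, lt_of_le_of_lt h2 h⟩, h2⟩⟩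
    rw [this, Real.volume_Ioc, sub_zero]
  · have h1 : cdf μ x = 1 := le_antisymm (cdf_le_one μ x) h
    have : Ioo (0:ℝ) 1 ∩ Iic (cdf μ x) = Ioo (0:ℝ) 1 := by
      rw [h1]
      exact inter_eq_left.2 (fun u hu => le_of_lt hu.2)
    rw [this, Real.volume_Ioo, h1]
    norm_num

end Quantile

section Lip

variable {φ : ℝ → ℝ}

lemma lipSet_nonempty (h : ∃ K : NNReal, LipschitzWith K φ) :
    {L : ℝ | 0 ≤ L ∧ LipschitzWith (Real.toNNReal L) φ}.Nonempty := by
  rcases h with ⟨K, hK⟩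
  exact ⟨K, K.coe_nonneg, by rwa [Real.toNNReal_coe]⟩

lemma lipSet_bddBelow : BddBelow {L : ℝ | 0 ≤ L ∧ LipschitzWith (Real.toNNReal L) φ} :=
  ⟨0, fun L hL => hL.1⟩

lemma lipConst_nonneg (h : ∃ K : NNReal, LipschitzWith K φ) : 0 ≤ lipConst φ :=
  le_csInf (lipSet_nonempty h) (fun L hL => hL.1)

lemma dist_le_lipConst (h : ∃ K : NNReal, LipschitzWith K φ) (x y : ℝ) :
    dist (φ x) (φ y) ≤ lipConst φ * dist x y := by
  rcases lipSet_nonempty h with ⟨L₀, hL₀⟩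
  rcases eq_or_lt_of_le (dist_nonneg : (0:ℝ) ≤ dist x y) with hd | hd
  · calc dist (φ x) (φ y) ≤ (Real.toNNReal L₀ : ℝ) * dist x y := hL₀.2.dist_le_mul x y
      _ = 0 := by rw [← hd]; ring
      _ ≤ _ := by rw [← hd]; simp
  · refine le_of_forall_pos_le_add (fun ε hε => ?_)
    rcases Real.lt_sInf_add_pos (lipSet_nonempty h) (div_pos hε hd) with ⟨L, hL, hLlt⟩
    calc dist (φ x) (φ y) ≤ (Real.toNNReal L : ℝ) * dist x y := hL.2.dist_le_mul x y
      _ = L * dist x y := by rw [Real.coe_toNNReal _ hL.1]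
      _ ≤ (lipConst φ + ε / dist x y) * dist x y := by
          apply mul_le_mul_of_nonneg_right hLlt.le dist_nonneg
      _ = lipConst φ * dist x y + ε := by field_simp

end Lip

section Easy

variable {μ₀ μ₁ : Measure ℝ} [IsProbabilityMeasure μ₀] [IsProbabilityMeasure μ₁]
  {π : Measure (ℝ × ℝ)}

lemma isProbCoupling (hπ : IsCoupling μ₀ μ₁ π) : IsProbabilityMeasure π := by
  constructor
  have := congrArg (fun m : Measure ℝ => m univ) hπ.1
  simp only [Measure.map_apply measurable_fst MeasurableSet.univ, preimage_univ] at this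
  rw [this, measure_univ]

lemma coupling_prod : IsCoupling μ₀ μ₁ (μ₀.prod μ₁) := by
  constructor
  · rw [Measure.map_fst_prod, measure_univ, one_smul]
  · rw [Measure.map_snd_prod, measure_univ, one_smul]

lemma integrable_cost (h₀ : Integrable (fun x => |x|) μ₀) (h₁ : Integrable (fun x => |x|) μ₁)
    (hπ : IsCoupling μ₀ μ₁ π) : Integrable (fun q : ℝ × ℝ => |q.1 - q.2|) π := by
  have := isProbCoupling hπ
  have habs : AEStronglyMeasurable (fun x : ℝ => |x|) (π.map Prod.fst) :=
    continuous_abs.aestronglyMeasurable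
  have habs' : AEStronglyMeasurable (fun x : ℝ => |x|) (π.map Prod.snd) :=
    continuous_abs.aestronglyMeasurable
  have h0' : Integrable (fun q : ℝ × ℝ => |q.1|) π := by
    have := (integrable_map_measure habs measurable_fst.aemeasurable).1 (hπ.1 ▸ h₀)
    exact this
  have h1' : Integrable (fun q : ℝ × ℝ => |q.2|) π := by
    have := (integrable_map_measure habs' measurable_snd.aemeasurable).1 (hπ.2 ▸ h₁)
    exact this
  refine (h0'.add h1').mono' ?_ ?_
  · exact (continuous_abs.comp (continuous_fst.sub continuous_snd)).aestronglyMeasurable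
  · filter_upwards with q
    simp only [Real.norm_eq_abs, abs_abs]
    exact abs_sub q.1 q.2

lemma integrable_bdd_comp {f : ℝ × ℝ → ℝ} {φ : ℝ → ℝ} (hc : Continuous φ)
    (hf : Continuous f) (hbd : ∃ M, ∀ x, |φ x| ≤ M) [IsProbabilityMeasure π] :
    Integrable (fun q => φ (f q)) π := by
  rcases hbd with ⟨M, hM⟩
  refine (integrable_const M).mono' ((hc.comp hf).aestronglyMeasurable) ?_
  filter_upwards with q
  exact (Real.norm_eq_abs _) ▸ hM (f q)

lemma pairing_le_cost (h₀ : Integrable (fun x => |x|) μ₀) (h₁ : Integrable (fun x => |x|) μ₁)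
    (hπ : IsCoupling μ₀ μ₁ π) {φ : ℝ → ℝ} (hlip : ∃ K : NNReal, LipschitzWith K φ)
    (hbd : ∃ M, ∀ x, |φ x| ≤ M) :
    (∫ x, φ x ∂μ₁) - (∫ x, φ x ∂μ₀) ≤ lipConst φ * ∫ q, |q.1 - q.2| ∂π := by
  have := isProbCoupling hπ
  have hcont : Continuous φ := hlip.choose_spec.continuous
  have hint1 : Integrable (fun q : ℝ × ℝ => φ q.2) π :=
    integrable_bdd_comp hcont continuous_snd hbd
  have hint0 : Integrable (fun q : ℝ × ℝ => φ q.1) π :=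
    integrable_bdd_comp hcont continuous_fst hbd
  have hI1 : ∫ x, φ x ∂μ₁ = ∫ q : ℝ × ℝ, φ q.2 ∂π := by
    rw [← hπ.2, integral_map measurable_snd.aemeasurable hcont.aestronglyMeasurable]
  have hI0 : ∫ x, φ x ∂μ₀ = ∫ q : ℝ × ℝ, φ q.1 ∂π := by
    rw [← hπ.1, integral_map measurable_fst.aemeasurable hcont.aestronglyMeasurable]
  rw [hI1, hI0, ← integral_sub hint1 hint0]
  have hcost := integrable_cost h₀ h₁ hπ
  calc ∫ q : ℝ × ℝ, (φ q.2 - φ q.1) ∂π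
      ≤ ∫ q : ℝ × ℝ, lipConst φ * |q.1 - q.2| ∂π := by
        refine integral_mono (hint1.sub hint0) (hcost.const_mul _) (fun q => ?_)
        calc φ q.2 - φ q.1 ≤ |φ q.2 - φ q.1| := le_abs_self _
          _ = dist (φ q.2) (φ q.1) := (Real.dist_eq _ _).symm
          _ ≤ lipConst φ * dist q.2 q.1 := dist_le_lipConst hlip _ _
          _ = lipConst φ * |q.1 - q.2| := by rw [Real.dist_eq, abs_sub_comm]
    _ = lipConst φ * ∫ q, |q.1 - q.2| ∂π := integral_const_mul _ _

end Easy

section GPhi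

noncomputable def gsign (μ₀ μ₁ : Measure ℝ) (N : ℕ) : ℝ → ℝ :=
  (Icc (-(N:ℝ)) N).indicator
    (fun r => if cdf μ₁ r < cdf μ₀ r then 1 else if cdf μ₀ r < cdf μ₁ r then -1 else 0)

noncomputable def phiN (μ₀ μ₁ : Measure ℝ) (N : ℕ) (t : ℝ) : ℝ :=
  ∫ r in (0:ℝ)..t, gsign μ₀ μ₁ N r

noncomputable def JN (μ₀ μ₁ : Measure ℝ) (N : ℕ) (u : ℝ) : ℝ :=
  ∫ r in (quant μ₀ u ⊓ quant μ₁ u)..(quant μ₀ u ⊔ quant μ₁ u),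
    (Icc (-(N:ℝ)) N).indicator (fun _ => (1:ℝ)) r

variable {μ₀ μ₁ : Measure ℝ} [IsProbabilityMeasure μ₀] [IsProbabilityMeasure μ₁] {N : ℕ} {u : ℝ}

lemma abs_gsign_le (r : ℝ) :
    |gsign μ₀ μ₁ N r| ≤ (Icc (-(N:ℝ)) N).indicator (fun _ => (1:ℝ)) r := by
  unfold gsign
  rcases em (r ∈ Icc (-(N:ℝ)) N) with h | h
  · rw [indicator_of_mem h, indicator_of_mem h]
    split_ifs <;> norm_num
  · rw [indicator_of_notMem h, indicator_of_notMem h, abs_zero]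

lemma abs_gsign_le_one (r : ℝ) : |gsign μ₀ μ₁ N r| ≤ 1 := by
  refine le_trans (abs_gsign_le r) ?_
  rcases em (r ∈ Icc (-(N:ℝ)) N) with h | h
  · rw [indicator_of_mem h]
  · rw [indicator_of_notMem h]; norm_num

lemma measurable_gsign : Measurable (gsign μ₀ μ₁ N) := by
  have hm0 : Measurable (cdf μ₀) := (monotone_cdf μ₀).measurable
  have hm1 : Measurable (cdf μ₁) := (monotone_cdf μ₁).measurable
  refine Measurable.indicator ?_ measurableSet_Icc
  exact Measurable.ite (measurableSet_lt hm1 hm0) measurable_const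
    (Measurable.ite (measurableSet_lt hm0 hm1) measurable_const measurable_const)

lemma integrable_indicator_Icc :
    Integrable ((Icc (-(N:ℝ)) N).indicator (fun _ => (1:ℝ))) volume := by
  rw [integrable_indicator_iff measurableSet_Icc]
  rw [integrableOn_const_iff]
  right
  rw [Real.volume_Icc]
  exact ENNReal.ofReal_lt_top

lemma integrable_gsign : Integrable (gsign μ₀ μ₁ N) volume := by
  refine (integrable_indicator_Icc (N := N)).mono' measurable_gsign.aestronglyMeasurable ?_
  filter_upwards with r
  rw [Real.norm_eq_abs]
  exact abs_gsign_le r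

lemma lipschitz_phiN : LipschitzWith 1 (phiN μ₀ μ₁ N) := by
  refine LipschitzWith.of_dist_le_mul (fun a b => ?_)
  have key : phiN μ₀ μ₁ N a - phiN μ₀ μ₁ N b = ∫ r in b..a, gsign μ₀ μ₁ N r :=
    integral_interval_sub_left (integrable_gsign.intervalIntegrable)
      (integrable_gsign.intervalIntegrable)
  rw [Real.dist_eq, key, NNReal.coe_one, one_mul, Real.dist_eq]
  have := intervalIntegral.norm_integral_le_of_norm_le_const
    (f := gsign μ₀ μ₁ N) (a := b) (b := a) (C := 1) ?_
  · rw [Real.norm_eq_abs] at this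
    calc |∫ r in b..a, gsign μ₀ μ₁ N r| ≤ 1 * |a - b| := this
      _ = |a - b| := one_mul _
  · intro x _
    rw [Real.norm_eq_abs]
    exact abs_gsign_le_one x

lemma abs_phiN_le : ∀ t, |phiN μ₀ μ₁ N t| ≤ ∫ r, |gsign μ₀ μ₁ N r| := by
  intro t
  have habs : Integrable (fun r => |gsign μ₀ μ₁ N r|) volume := integrable_gsign.abs
  have hnn : 0 ≤ᵐ[volume] fun r => |gsign μ₀ μ₁ N r| := by
    filter_upwards with r using abs_nonneg _
  rcases le_total (0:ℝ) t with h | h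
  · rw [phiN, integral_of_le h]
    calc |∫ r in Ioc 0 t, gsign μ₀ μ₁ N r| ≤ ∫ r in Ioc 0 t, |gsign μ₀ μ₁ N r| := by
          rw [← Real.norm_eq_abs]
          refine le_trans (norm_integral_le_integral_norm _) (le_of_eq ?_)
          rfl
      _ ≤ ∫ r, |gsign μ₀ μ₁ N r| := setIntegral_le_integral habs hnn
  · rw [phiN, integral_of_ge h, abs_neg]
    calc |∫ r in Ioc t 0, gsign μ₀ μ₁ N r| ≤ ∫ r in Ioc t 0, |gsign μ₀ μ₁ N r| := by
          rw [← Real.norm_eq_abs]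
          refine le_trans (norm_integral_le_integral_norm _) (le_of_eq ?_)
          rfl
      _ ≤ ∫ r, |gsign μ₀ μ₁ N r| := setIntegral_le_integral habs hnn

lemma cdf_lt_between {ν ν' : Measure ℝ} [IsProbabilityMeasure ν] [IsProbabilityMeasure ν']
    (hu : u ∈ Ioo (0:ℝ) 1) {r : ℝ} (h1 : quant ν u < r) (h2 : r < quant ν' u) :
    cdf ν' r < cdf ν r := by
  have ha : u ≤ cdf ν r := (quant_le_iff hu).1 h1.le
  have hb : cdf ν' r < u := by
    by_contra h
    push_neg at h
    exact absurd ((quant_le_iff hu).2 h) (not_le.2 h2)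
  exact lt_of_lt_of_le hb ha

lemma phiN_quant_diff (hu : u ∈ Ioo (0:ℝ) 1) :
    phiN μ₀ μ₁ N (quant μ₁ u) - phiN μ₀ μ₁ N (quant μ₀ u) = JN μ₀ μ₁ N u := by
  set a := quant μ₀ u with ha
  set b := quant μ₁ u with hb
  have key : phiN μ₀ μ₁ N b - phiN μ₀ μ₁ N a = ∫ r in a..b, gsign μ₀ μ₁ N r :=
    integral_interval_sub_left (integrable_gsign.intervalIntegrable)
      (integrable_gsign.intervalIntegrable)
  rw [key, JN]
  rcases le_total a b with hab | hab
  · rw [inf_eq_left.2 hab, sup_eq_right.2 hab, integral_of_le hab, integral_of_le hab,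
      setIntegral_congr_set Ioo_ae_eq_Ioc.symm, setIntegral_congr_set Ioo_ae_eq_Ioc.symm]
    refine setIntegral_congr_fun measurableSet_Ioo (fun r hr => ?_)
    have hlt : cdf μ₁ r < cdf μ₀ r := cdf_lt_between hu hr.1 hr.2
    rcases em (r ∈ Icc (-(N:ℝ)) N) with h | h
    · rw [gsign, indicator_of_mem h, indicator_of_mem h, if_pos hlt]
    · rw [gsign, indicator_of_notMem h, indicator_of_notMem h]
  · rw [inf_eq_right.2 hab, sup_eq_left.2 hab, integral_symm, integral_of_le hab,
      integral_of_le hab, setIntegral_congr_set Ioo_ae_eq_Ioc.symm,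
      setIntegral_congr_set Ioo_ae_eq_Ioc.symm]
    rw [show (∫ r in Ioo b a, gsign μ₀ μ₁ N r) =
        ∫ r in Ioo b a, -((Icc (-(N:ℝ)) N).indicator (fun _ => (1:ℝ)) r) from ?_]
    · rw [MeasureTheory.integral_neg, neg_neg]
    refine setIntegral_congr_fun measurableSet_Ioo (fun r hr => ?_)
    have hlt : cdf μ₀ r < cdf μ₁ r := cdf_lt_between hu hr.1 hr.2
    rcases em (r ∈ Icc (-(N:ℝ)) N) with h | h
    · rw [gsign, indicator_of_mem h, indicator_of_mem h, if_neg (not_lt.2 hlt.le), if_pos hlt]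
    · rw [gsign, indicator_of_notMem h, indicator_of_notMem h, neg_zero]

lemma JN_nonneg (u : ℝ) : 0 ≤ JN μ₀ μ₁ N u := by
  refine intervalIntegral.integral_nonneg inf_le_sup (fun x _ => ?_)
  rcases em (x ∈ Icc (-(N:ℝ)) N) with h | h
  · rw [indicator_of_mem h]; norm_num
  · rw [indicator_of_notMem h]

lemma JN_mono (u : ℝ) : Monotone (fun N => JN μ₀ μ₁ N u) := by
  refine monotone_nat_of_le_succ (fun N => ?_)
  refine intervalIntegral.integral_mono_on inf_le_sup
    (integrable_indicator_Icc.intervalIntegrable)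
    (integrable_indicator_Icc.intervalIntegrable) (fun x _ => ?_)
  refine indicator_le_indicator_of_subset (Icc_subset_Icc ?_ ?_) (fun _ => zero_le_one) x
  · push_cast; linarith
  · push_cast; linarith

lemma JN_tendsto (u : ℝ) :
    Tendsto (fun N => JN μ₀ μ₁ N u) atTop (𝓝 |quant μ₀ u - quant μ₁ u|) := by
  set a := quant μ₀ u
  set b := quant μ₁ u
  have key : ∀ N : ℕ, max |a| |b| ≤ N → JN μ₀ μ₁ N u = |a - b| := by
    intro N hN
    have h1 : -(N:ℝ) ≤ a ⊓ b := by
      refine le_inf ?_ ?_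
      · refine le_trans ?_ (neg_abs_le a)
        refine neg_le_neg (le_trans (le_max_left |a| |b|) hN)
      · refine le_trans ?_ (neg_abs_le b)
        refine neg_le_neg (le_trans (le_max_right |a| |b|) hN)
    have h2 : a ⊔ b ≤ (N:ℝ) :=
      sup_le (le_trans (le_abs_self a) (le_trans (le_max_left _ _) hN))
        (le_trans (le_abs_self b) (le_trans (le_max_right _ _) hN))
    have heq : EqOn ((Icc (-(N:ℝ)) N).indicator (fun _ => (1:ℝ))) (fun _ => (1:ℝ))
        (uIcc (a ⊓ b) (a ⊔ b)) := by
      intro x hx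
      rw [uIcc_of_le inf_le_sup] at hx
      exact indicator_of_mem (mem_Icc.2 ⟨le_trans h1 hx.1, le_trans hx.2 h2⟩) _
    rw [JN, intervalIntegral.integral_congr heq, intervalIntegral.integral_const, smul_eq_mul,
      mul_one, max_sub_min_eq_abs, abs_sub_comm]
  have hev : ∀ᶠ N : ℕ in atTop, JN μ₀ μ₁ N u = |a - b| := by
    refine eventually_atTop.2 ⟨⌈max |a| |b|⌉₊, fun N hN => key N ?_⟩
    exact le_trans (Nat.le_ceil _) (by exact_mod_cast hN)
  exact Tendsto.congr' (hev.mono fun N h => h.symm) tendsto_const_nhds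

end GPhi

section Wrappers
variable {μ₀ μ₁ : Measure ℝ} [IsProbabilityMeasure μ₀] [IsProbabilityMeasure μ₁] {u : ℝ}

lemma aemeasurable_quant' (μ : Measure ℝ) [IsProbabilityMeasure μ] :
    AEMeasurable (quant μ) (volume.restrict (Ioo (0:ℝ) 1)) := aemeasurable_quant
lemma map_quant' (μ : Measure ℝ) [IsProbabilityMeasure μ] :
    Measure.map (quant μ) (volume.restrict (Ioo (0:ℝ) 1)) = μ := map_quant
lemma abs_phiN_le' (μ₀ μ₁ : Measure ℝ) [IsProbabilityMeasure μ₀] [IsProbabilityMeasure μ₁] (N : ℕ) :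
    ∀ t, |phiN μ₀ μ₁ N t| ≤ ∫ r, |gsign μ₀ μ₁ N r| := abs_phiN_le
lemma lipschitz_phiN' (μ₀ μ₁ : Measure ℝ) [IsProbabilityMeasure μ₀] [IsProbabilityMeasure μ₁] (N : ℕ) : LipschitzWith 1 (phiN μ₀ μ₁ N) :=
  lipschitz_phiN
lemma phiN_quant_diff' (μ₀ μ₁ : Measure ℝ) [IsProbabilityMeasure μ₀] [IsProbabilityMeasure μ₁]
    (N : ℕ) (hu : u ∈ Ioo (0:ℝ) 1) :
    phiN μ₀ μ₁ N (quant μ₁ u) - phiN μ₀ μ₁ N (quant μ₀ u) = JN μ₀ μ₁ N u := phiN_quant_diff hu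
lemma JN_nonneg' (μ₀ μ₁ : Measure ℝ) [IsProbabilityMeasure μ₀] [IsProbabilityMeasure μ₁] (N : ℕ) (u : ℝ) : 0 ≤ JN μ₀ μ₁ N u := JN_nonneg u
lemma JN_mono' (μ₀ μ₁ : Measure ℝ) [IsProbabilityMeasure μ₀] [IsProbabilityMeasure μ₁] (u : ℝ) : Monotone (fun N => JN μ₀ μ₁ N u) := JN_mono u
lemma JN_tendsto' (μ₀ μ₁ : Measure ℝ) [IsProbabilityMeasure μ₀] [IsProbabilityMeasure μ₁] (u : ℝ) :
    Tendsto (fun N => JN μ₀ μ₁ N u) atTop (𝓝 |quant μ₀ u - quant μ₁ u|) := JN_tendsto u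

end Wrappers

section main
variable {μ₀ μ₁ : Measure ℝ} [IsProbabilityMeasure μ₀] [IsProbabilityMeasure μ₁]
variable {μ : Measure ℝ} [IsProbabilityMeasure μ] {N : ℕ} {u : ℝ}

local notation "ν01" => volume.restrict (Ioo (0:ℝ) 1)

/-- integral of a function against μ via the quantile representation -/
lemma integral_comp_quant {f : ℝ → ℝ} (hf : AEStronglyMeasurable f μ) :
    ∫ x, f x ∂μ = ∫ u in Ioo (0:ℝ) 1, f (quant μ u) := by
  conv_lhs => rw [← map_quant' μ]
  rw [integral_map (aemeasurable_quant' μ)]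
  rw [map_quant' μ]
  exact hf

lemma integrable_bdd_quant {f : ℝ → ℝ} (hf : Continuous f) {M : ℝ} (hM : ∀ t, |f t| ≤ M) :
    Integrable (fun u => f (quant μ u)) ν01 := by
  refine (integrable_const M).mono'
    (hf.measurable.comp_aemeasurable (aemeasurable_quant' μ)).aestronglyMeasurable ?_
  filter_upwards with u
  rw [Real.norm_eq_abs]
  exact hM _

lemma integrable_abs_quant (h : Integrable (fun x => |x|) μ) :
    Integrable (fun u => |quant μ u|) ν01 := by
  have h' : Integrable (fun x => |x|) (Measure.map (quant μ) ν01) := by rw [map_quant' μ]; exact h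
  exact (integrable_map_measure continuous_abs.aestronglyMeasurable (aemeasurable_quant' μ)).1 h'

lemma integrable_abs_quant_sub (h₀ : Integrable (fun x => |x|) μ₀)
    (h₁ : Integrable (fun x => |x|) μ₁) :
    Integrable (fun u => |quant μ₀ u - quant μ₁ u|) ν01 := by
  refine ((integrable_abs_quant h₀).add (integrable_abs_quant h₁)).mono'
    (continuous_abs.measurable.comp_aemeasurable ((aemeasurable_quant' μ₀).sub (aemeasurable_quant' μ₁))).aestronglyMeasurable ?_
  filter_upwards with u
  rw [Real.norm_eq_abs, abs_abs]
  exact abs_sub _ _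

lemma integrable_phiN_quant (μ' : Measure ℝ) [IsProbabilityMeasure μ'] :
    Integrable (fun u => phiN μ₀ μ₁ N (quant μ' u)) ν01 :=
  integrable_bdd_quant (μ := μ') (lipschitz_phiN' μ₀ μ₁ N).continuous (abs_phiN_le' μ₀ μ₁ N)

lemma diff_phiN_eq (h₀ : Integrable (fun x => |x|) μ₀) (h₁ : Integrable (fun x => |x|) μ₁) :
    (∫ x, phiN μ₀ μ₁ N x ∂μ₁) - (∫ x, phiN μ₀ μ₁ N x ∂μ₀)
      = ∫ u in Ioo (0:ℝ) 1, JN μ₀ μ₁ N u := by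
  have hc := (lipschitz_phiN' μ₀ μ₁ N).continuous
  rw [integral_comp_quant (μ := μ₁) hc.aestronglyMeasurable,
    integral_comp_quant (μ := μ₀) hc.aestronglyMeasurable,
    ← integral_sub (integrable_phiN_quant μ₁) (integrable_phiN_quant μ₀)]
  refine setIntegral_congr_fun measurableSet_Ioo (fun u hu => ?_)
  exact phiN_quant_diff' μ₀ μ₁ N hu

lemma integrable_JN (h₀ : Integrable (fun x => |x|) μ₀) (h₁ : Integrable (fun x => |x|) μ₁) :
    Integrable (JN μ₀ μ₁ N) ν01 := by
  refine ((integrable_phiN_quant (μ₀ := μ₀) (μ₁ := μ₁) (N := N) μ₁).sub (integrable_phiN_quant (μ₀ := μ₀) (μ₁ := μ₁) (N := N) μ₀)).congr ?_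
  rw [EventuallyEq, ae_restrict_iff' measurableSet_Ioo]
  filter_upwards with u hu
  exact phiN_quant_diff' μ₀ μ₁ N hu

lemma tendsto_JN_integral (h₀ : Integrable (fun x => |x|) μ₀)
    (h₁ : Integrable (fun x => |x|) μ₁) :
    Tendsto (fun N => ∫ u in Ioo (0:ℝ) 1, JN μ₀ μ₁ N u) atTop
      (𝓝 (∫ u in Ioo (0:ℝ) 1, |quant μ₀ u - quant μ₁ u|)) := by
  refine integral_tendsto_of_tendsto_of_monotone (fun N => integrable_JN h₀ h₁)
    (integrable_abs_quant_sub h₀ h₁) ?_ ?_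
  · filter_upwards with u using JN_mono' μ₀ μ₁ u
  · filter_upwards with u using JN_tendsto' μ₀ μ₁ u

/-- the monotone (quantile) coupling -/
noncomputable def quantCoupling (μ₀ μ₁ : Measure ℝ) : Measure (ℝ × ℝ) :=
  Measure.map (fun u => (quant μ₀ u, quant μ₁ u)) ν01

lemma aemeasurable_quant_pair :
    AEMeasurable (fun u => (quant μ₀ u, quant μ₁ u)) ν01 :=
  (aemeasurable_quant' μ₀).prodMk (aemeasurable_quant' μ₁)

lemma isCoupling_quantCoupling : IsCoupling μ₀ μ₁ (quantCoupling μ₀ μ₁) := by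
  constructor
  · rw [quantCoupling, AEMeasurable.map_map_of_aemeasurable
      measurable_fst.aemeasurable aemeasurable_quant_pair]
    exact map_quant' μ₀
  · rw [quantCoupling, AEMeasurable.map_map_of_aemeasurable
      measurable_snd.aemeasurable aemeasurable_quant_pair]
    exact map_quant' μ₁

lemma cost_quantCoupling :
    ∫ q, |q.1 - q.2| ∂(quantCoupling μ₀ μ₁)
      = ∫ u in Ioo (0:ℝ) 1, |quant μ₀ u - quant μ₁ u| := by
  rw [quantCoupling, integral_map aemeasurable_quant_pair
    (Continuous.aestronglyMeasurable (by fun_prop : Continuous fun q : ℝ × ℝ => |q.1 - q.2|))]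

end main

/-- Kantorovich duality: for probability measures `μ₀, μ₁` on `ℝ` with finite first moment,
`W₁(μ₀, μ₁)` is the supremum over all bounded Lipschitz `φ` with positive Lipschitz constant
of `(1 / Lip(φ)) * (∫ φ dμ₁ - ∫ φ dμ₀)`. -/
theorem kantorovich_duality (μ₀ μ₁ : Measure ℝ)
    [IsProbabilityMeasure μ₀] [IsProbabilityMeasure μ₁]
    (h₀ : Integrable (fun x => |x|) μ₀) (h₁ : Integrable (fun x => |x|) μ₁) :
    W1 μ₀ μ₁ = sSup {r : ℝ | ∃ φ : ℝ → ℝ,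
      (∃ K : NNReal, LipschitzWith K φ) ∧
      (∃ M : ℝ, ∀ x, |φ x| ≤ M) ∧
      0 < lipConst φ ∧
      r = (1 / lipConst φ) * ((∫ x, φ x ∂μ₁) - ∫ x, φ x ∂μ₀)} := by
  set S := {r : ℝ | ∃ φ : ℝ → ℝ,
      (∃ K : NNReal, LipschitzWith K φ) ∧
      (∃ M : ℝ, ∀ x, |φ x| ≤ M) ∧
      0 < lipConst φ ∧
      r = (1 / lipConst φ) * ((∫ x, φ x ∂μ₁) - ∫ x, φ x ∂μ₀)} with hS
  -- every candidate is at most every transport cost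
  have hr_le : ∀ r ∈ S, ∀ π : Measure (ℝ × ℝ), IsCoupling μ₀ μ₁ π →
      r ≤ ∫ q, |q.1 - q.2| ∂π := by
    rintro r ⟨φ, hlip, hbd, hpos, rfl⟩ π hπ
    have h := pairing_le_cost h₀ h₁ hπ hlip hbd
    rw [one_div, inv_mul_le_iff₀ hpos]
    exact h
  have hbddS : BddAbove S :=
    ⟨∫ q, |q.1 - q.2| ∂(μ₀.prod μ₁), fun r hr => hr_le r hr _ coupling_prod⟩
  -- a generic lower bound for lipConst
  have hlipconst_ge : ∀ φ : ℝ → ℝ, (∃ K : NNReal, LipschitzWith K φ) → ∀ a b : ℝ, a ≠ b →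
      |φ a - φ b| / |a - b| ≤ lipConst φ := by
    intro φ hK a b hab
    refine le_csInf (lipSet_nonempty hK) (fun L hL => ?_)
    have hd := hL.2.dist_le_mul a b
    rw [Real.dist_eq, Real.dist_eq, Real.coe_toNNReal _ hL.1] at hd
    rw [div_le_iff₀ (abs_pos.2 (sub_ne_zero.2 hab))]
    exact hd
  have hlipconst_pos : ∀ φ : ℝ → ℝ, (∃ K : NNReal, LipschitzWith K φ) → ∀ a b : ℝ,
      φ a ≠ φ b → 0 < lipConst φ := by
    intro φ hK a b hab
    have hane : a ≠ b := fun h => hab (by rw [h])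
    exact lt_of_lt_of_le
      (div_pos (abs_pos.2 (sub_ne_zero.2 hab)) (abs_pos.2 (sub_ne_zero.2 hane)))
      (hlipconst_ge φ hK a b hane)
  -- the clamp function, used to show `S` is nonempty and `sSup S ≥ 0`
  set c : ℝ → ℝ := fun x => max (min x 1) (-1) with hc
  have hlipc : LipschitzWith 1 c := by
    refine LipschitzWith.of_dist_le_mul (fun a b => ?_)
    rw [Real.dist_eq, Real.dist_eq, NNReal.coe_one, one_mul]
    calc |c a - c b| ≤ |min a 1 - min b 1| := abs_max_sub_max_le_abs _ _ _
      _ ≤ max |a - b| |1 - 1| := abs_min_sub_min_le_max a 1 b 1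
      _ = |a - b| := by rw [sub_self, abs_zero, max_eq_left (abs_nonneg _)]
  have hbdc : ∀ x, |c x| ≤ 1 := by
    intro x
    refine abs_le.2 ⟨le_max_right _ _, max_le (min_le_right _ _) (by norm_num)⟩
  have hc10 : c 1 ≠ c 0 := by norm_num [hc]
  have hcpos : 0 < lipConst c := hlipconst_pos c ⟨1, hlipc⟩ 1 0 hc10
  set c' : ℝ → ℝ := fun x => -(c x) with hc'
  have hlipc' : LipschitzWith 1 c' := by
    refine LipschitzWith.of_dist_le_mul (fun a b => ?_)
    have := hlipc.dist_le_mul a b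
    rw [Real.dist_eq] at this ⊢
    calc |c' a - c' b| = |c a - c b| := by rw [hc']; rw [← abs_neg]; ring_nf
      _ ≤ _ := this
  have hbdc' : ∀ x, |c' x| ≤ 1 := fun x => by rw [hc', abs_neg]; exact hbdc x
  have hc10' : c' 1 ≠ c' 0 := by norm_num [hc', hc]
  have hcpos' : 0 < lipConst c' := hlipconst_pos c' ⟨1, hlipc'⟩ 1 0 hc10'
  have hmemc : (1 / lipConst c) * ((∫ x, c x ∂μ₁) - ∫ x, c x ∂μ₀) ∈ S :=
    ⟨c, ⟨1, hlipc⟩, ⟨1, hbdc⟩, hcpos, rfl⟩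
  have hmemc' : (1 / lipConst c') * ((∫ x, c' x ∂μ₁) - ∫ x, c' x ∂μ₀) ∈ S :=
    ⟨c', ⟨1, hlipc'⟩, ⟨1, hbdc'⟩, hcpos', rfl⟩
  have hSne : S.Nonempty := ⟨_, hmemc⟩
  have hSnonneg : 0 ≤ sSup S := by
    rcases le_total 0 ((∫ x, c x ∂μ₁) - ∫ x, c x ∂μ₀) with hd | hd
    · refine le_trans (mul_nonneg (le_of_lt (div_pos one_pos hcpos)) hd) (le_csSup hbddS hmemc)
    · refine le_trans ?_ (le_csSup hbddS hmemc')
      have : (∫ x, c' x ∂μ₁) - ∫ x, c' x ∂μ₀ = -((∫ x, c x ∂μ₁) - ∫ x, c x ∂μ₀) := by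
        rw [hc']
        rw [MeasureTheory.integral_neg, MeasureTheory.integral_neg]
        ring
      rw [this]
      exact mul_nonneg (le_of_lt (div_pos one_pos hcpos')) (by linarith)
  -- sSup S ≤ W1
  have hside1 : sSup S ≤ W1 μ₀ μ₁ := by
    refine csSup_le hSne (fun r hr => ?_)
    have : Nonempty {π : Measure (ℝ × ℝ) // IsCoupling μ₀ μ₁ π} :=
      ⟨⟨μ₀.prod μ₁, coupling_prod⟩⟩
    exact le_ciInf (fun π => hr_le r hr π.1 π.2)
  -- W1 ≤ quantile coupling cost
  have hW1_le : W1 μ₀ μ₁ ≤ ∫ u in Ioo (0:ℝ) 1, |quant μ₀ u - quant μ₁ u| := by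
    have hbb : BddBelow (range (fun π : {π : Measure (ℝ × ℝ) // IsCoupling μ₀ μ₁ π} =>
        ∫ q, |q.1 - q.2| ∂(π.1))) := by
      refine ⟨0, ?_⟩
      rintro x ⟨π, rfl⟩
      exact integral_nonneg (fun q => abs_nonneg _)
    rw [← cost_quantCoupling]
    exact ciInf_le hbb ⟨quantCoupling μ₀ μ₁, isCoupling_quantCoupling⟩
  -- each truncated dual value is ≤ sSup S
  have hJle : ∀ N : ℕ, (∫ u in Ioo (0:ℝ) 1, JN μ₀ μ₁ N u) ≤ sSup S := by
    intro N
    set d := (∫ x, phiN μ₀ μ₁ N x ∂μ₁) - ∫ x, phiN μ₀ μ₁ N x ∂μ₀ with hd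
    have hdeq : d = ∫ u in Ioo (0:ℝ) 1, JN μ₀ μ₁ N u := diff_phiN_eq h₀ h₁
    have hdnn : 0 ≤ d := by
      rw [hdeq]
      exact setIntegral_nonneg measurableSet_Ioo (fun u _ => JN_nonneg' μ₀ μ₁ N u)
    rcases eq_or_lt_of_le hdnn with h0 | h0
    · rw [← hdeq, ← h0]
      exact hSnonneg
    · have hex : ∃ a b : ℝ, phiN μ₀ μ₁ N a ≠ phiN μ₀ μ₁ N b := by
        by_contra hcon
        push_neg at hcon
        have hconst : ∀ x, phiN μ₀ μ₁ N x = phiN μ₀ μ₁ N 0 := fun x => hcon x 0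
        have e1 : ∫ x, phiN μ₀ μ₁ N x ∂μ₁ = phiN μ₀ μ₁ N 0 := by
          rw [show (fun x => phiN μ₀ μ₁ N x) = fun _ => phiN μ₀ μ₁ N 0 from funext hconst]
          simp
        have e0 : ∫ x, phiN μ₀ μ₁ N x ∂μ₀ = phiN μ₀ μ₁ N 0 := by
          rw [show (fun x => phiN μ₀ μ₁ N x) = fun _ => phiN μ₀ μ₁ N 0 from funext hconst]
          simp
        rw [hd, e1, e0, sub_self] at h0
        exact lt_irrefl _ h0
      obtain ⟨a, b, hab⟩ := hex
      have hpos : 0 < lipConst (phiN μ₀ μ₁ N) :=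
        hlipconst_pos _ ⟨1, lipschitz_phiN' μ₀ μ₁ N⟩ a b hab
      have hle1 : lipConst (phiN μ₀ μ₁ N) ≤ 1 := by
        refine csInf_le lipSet_bddBelow ⟨zero_le_one, ?_⟩
        rw [Real.toNNReal_one]
        exact lipschitz_phiN' μ₀ μ₁ N
      have hmem : (1 / lipConst (phiN μ₀ μ₁ N)) * d ∈ S :=
        ⟨phiN μ₀ μ₁ N, ⟨1, lipschitz_phiN' μ₀ μ₁ N⟩, ⟨_, abs_phiN_le' μ₀ μ₁ N⟩, hpos, rfl⟩
      calc (∫ u in Ioo (0:ℝ) 1, JN μ₀ μ₁ N u) = d := hdeq.symm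
        _ = 1 * d := (one_mul d).symm
        _ ≤ (1 / lipConst (phiN μ₀ μ₁ N)) * d :=
            mul_le_mul_of_nonneg_right (one_le_one_div hpos hle1) hdnn
        _ ≤ sSup S := le_csSup hbddS hmem
  have hside2 : W1 μ₀ μ₁ ≤ sSup S :=
    le_trans hW1_le (le_of_tendsto (tendsto_JN_integral h₀ h₁)
      (Filter.Eventually.of_forall hJle))
  exact le_antisymm hside2 hside1
end
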